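/- arXiv:2212.04421 — 4 statements merged into one kernel-verified Lean document; each statement's English description precedes it below -/
import Mathlib

section
/- If f, g : ℝ≥0 → ℂ are locally square-integrable, g is essentially bounded, and f is not concentrated on any null set in the sense that for every measurable set S ⊆ ℝ≥0 of natural density zero one has ∫_{S ∩ [0,T]} |f|² dt = o(∫_0^T |f|² dt) as T → ∞, then limsup_{T→∞} |∫_0^T f² g dt| / ∫_0^T |f|² dt ≤ sup { x ≥ 0 : the set where |g| ≥ x has positive upper natural density }. -/
open MeasureTheory Filter

/-- `S` has natural density `d`: `meas(S ∩ [0,T])/T → d` as `T → ∞`. -/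
def HasNatDensity (S : Set ℝ) (d : ℝ) : Prop :=
  Tendsto (fun T : ℝ => (volume (S ∩ Set.Icc (0:ℝ) T)).toReal / T) atTop (nhds d)

theorem stmt2 (f g : ℝ → ℂ)
    (hf : ∀ T : ℝ, IntegrableOn (fun t => ‖f t‖^2) (Set.Ioc 0 T))
    (hg : Measurable g) (C : ℝ) (hgb : ∀ t, ‖g t‖ ≤ C)
    (hpos : ∀ᶠ T in atTop, 0 < ∫ t in Set.Ioc (0:ℝ) T, ‖f t‖^2)
    (hcns : ∀ S : Set ℝ, MeasurableSet S → HasNatDensity S 0 →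
      Tendsto (fun T : ℝ => (∫ t in S ∩ Set.Ioc 0 T, ‖f t‖^2) /
        ∫ t in Set.Ioc (0:ℝ) T, ‖f t‖^2) atTop (nhds 0)) :
    limsup (fun T : ℝ => ‖∫ t in Set.Ioc (0:ℝ) T, (f t)^2 * g t‖ /
        ∫ t in Set.Ioc (0:ℝ) T, ‖f t‖^2) atTop
      ≤ sSup {x : ℝ | 0 ≤ x ∧
          0 < limsup (fun T : ℝ =>
            (volume ({t : ℝ | x ≤ ‖g t‖} ∩ Set.Icc (0:ℝ) T)).toReal / T) atTop} := by
  set A : Set ℝ := {x : ℝ | 0 ≤ x ∧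
          0 < limsup (fun T : ℝ =>
            (volume ({t : ℝ | x ≤ ‖g t‖} ∩ Set.Icc (0:ℝ) T)).toReal / T) atTop} with hA
  set D : ℝ → ℝ := fun T => ∫ t in Set.Ioc (0:ℝ) T, ‖f t‖^2 with hDdef
  set R : ℝ → ℝ := fun T => ‖∫ t in Set.Ioc (0:ℝ) T, (f t)^2 * g t‖ / D T with hRdef
  have hC0 : 0 ≤ C := le_trans (norm_nonneg _) (hgb 0)
  -- 0 ∈ A
  have h0A : (0:ℝ) ∈ A := by
    constructor
    · rfl
    · have huniv : {t : ℝ | (0:ℝ) ≤ ‖g t‖} = Set.univ :=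
        Set.eq_univ_iff_forall.mpr fun t => norm_nonneg _
      have heq : ∀ᶠ T in atTop,
          (volume ({t : ℝ | (0:ℝ) ≤ ‖g t‖} ∩ Set.Icc (0:ℝ) T)).toReal / T = 1 := by
        filter_upwards [eventually_gt_atTop (0:ℝ)] with T hT
        rw [huniv, Set.univ_inter, Real.volume_Icc]
        rw [ENNReal.toReal_ofReal (by linarith)]
        field_simp
        ring
      rw [limsup_congr heq, limsup_const]
      norm_num
  -- A bounded above by C
  have hbdd : BddAbove A := by
    refine ⟨C, fun x hx => ?_⟩
    by_contra hxC
    push_neg at hxC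
    have hempty : {t : ℝ | x ≤ ‖g t‖} = ∅ := by
      apply Set.eq_empty_iff_forall_notMem.mpr
      intro t ht
      exact absurd (le_trans ht (hgb t)) (not_le.mpr hxC)
    have hzero : limsup (fun T : ℝ =>
        (volume ({t : ℝ | x ≤ ‖g t‖} ∩ Set.Icc (0:ℝ) T)).toReal / T) atTop = 0 := by
      have heq : ∀ T : ℝ, (volume ({t : ℝ | x ≤ ‖g t‖} ∩ Set.Icc (0:ℝ) T)).toReal / T = 0 := by
        intro T; rw [hempty]; simp
      simp only [heq, limsup_const]
    have h2 := hx.2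
    rw [hzero] at h2
    exact lt_irrefl _ h2
  have hM0 : 0 ≤ sSup A := le_csSup hbdd h0A
  -- key step
  have key : ∀ x : ℝ, sSup A < x → limsup R atTop ≤ x := by
    intro x hx
    have hx0 : 0 ≤ x := le_trans hM0 hx.le
    have hxA : x ∉ A := fun h => absurd (le_csSup hbdd h) (not_le.mpr hx)
    set S : Set ℝ := {t : ℝ | x ≤ ‖g t‖} with hS
    have hSm : MeasurableSet S := measurableSet_le measurable_const hg.norm
    -- S has natural density 0
    have hdens : HasNatDensity S 0 := by
      have hlimsup_le : limsup (fun T : ℝ =>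
          (volume (S ∩ Set.Icc (0:ℝ) T)).toReal / T) atTop ≤ 0 := by
        by_contra h
        push_neg at h
        exact hxA ⟨hx0, h⟩
      have hub : ∀ᶠ T in atTop, (volume (S ∩ Set.Icc (0:ℝ) T)).toReal / T ≤ 1 := by
        filter_upwards [eventually_gt_atTop (0:ℝ)] with T hT
        have hvle : volume (S ∩ Set.Icc (0:ℝ) T) ≤ ENNReal.ofReal T := by
          calc volume (S ∩ Set.Icc (0:ℝ) T) ≤ volume (Set.Icc (0:ℝ) T) :=
                measure_mono Set.inter_subset_right
            _ = ENNReal.ofReal T := by rw [Real.volume_Icc]; norm_num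
        have : (volume (S ∩ Set.Icc (0:ℝ) T)).toReal ≤ T := by
          calc (volume (S ∩ Set.Icc (0:ℝ) T)).toReal
              ≤ (ENNReal.ofReal T).toReal :=
                ENNReal.toReal_mono ENNReal.ofReal_ne_top hvle
            _ = T := ENNReal.toReal_ofReal hT.le
        rw [div_le_one hT]
        exact this
      have hlb : ∀ᶠ T in atTop, (0:ℝ) ≤ (volume (S ∩ Set.Icc (0:ℝ) T)).toReal / T := by
        filter_upwards [eventually_gt_atTop (0:ℝ)] with T hT
        exact div_nonneg ENNReal.toReal_nonneg hT.le
      refine tendsto_of_le_liminf_of_limsup_le ?_ hlimsup_le ?_ ?_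
      · exact le_liminf_of_le (isCoboundedUnder_ge_of_eventually_le _ hub) hlb
      · exact ⟨1, hub⟩
      · exact ⟨0, hlb⟩
    have hr := hcns S hSm hdens
    -- show limsup R ≤ x + ε for all ε > 0
    refine le_of_forall_pos_le_add fun ε hε => ?_
    have hrC : Tendsto (fun T : ℝ => C * ((∫ t in S ∩ Set.Ioc 0 T, ‖f t‖^2) / D T))
        atTop (nhds 0) := by
      have := hr.const_mul C
      simpa using this
    have hev : ∀ᶠ T in atTop, R T ≤ x + ε := by
      filter_upwards [hpos, hrC.eventually (gt_mem_nhds hε)] with T hDpos hCr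
      have hDpos' : 0 < D T := hDpos
      -- the integral inequality
      have hint : ‖∫ t in Set.Ioc (0:ℝ) T, (f t)^2 * g t‖
          ≤ C * (∫ t in S ∩ Set.Ioc 0 T, ‖f t‖^2) + x * D T := by
        have h1 : ‖∫ t in Set.Ioc (0:ℝ) T, (f t)^2 * g t‖
            ≤ ∫ t in Set.Ioc (0:ℝ) T, ‖(f t)^2 * g t‖ :=
          norm_integral_le_integral_norm _
        have hind : IntegrableOn (S.indicator fun t => ‖f t‖^2) (Set.Ioc 0 T) :=
          (hf T).indicator hSm
        have h2 : (∫ t in Set.Ioc (0:ℝ) T, ‖(f t)^2 * g t‖)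
            ≤ ∫ t in Set.Ioc (0:ℝ) T,
              (C * S.indicator (fun t => ‖f t‖^2) t + x * ‖f t‖^2) := by
          refine integral_mono_of_nonneg (Eventually.of_forall fun t => norm_nonneg _)
            ((hind.const_mul C).add ((hf T).const_mul x))
            (Eventually.of_forall fun t => ?_)
          dsimp only
          have hnorm : ‖(f t)^2 * g t‖ = ‖f t‖^2 * ‖g t‖ := by
            rw [norm_mul, norm_pow]
          by_cases ht : t ∈ S
          · rw [hnorm, Set.indicator_of_mem ht]
            have : ‖f t‖^2 * ‖g t‖ ≤ C * ‖f t‖^2 := by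
              rw [mul_comm]
              exact mul_le_mul_of_nonneg_right (hgb t) (sq_nonneg _)
            have hxnn : 0 ≤ x * ‖f t‖^2 := mul_nonneg hx0 (sq_nonneg _)
            linarith
          · rw [hnorm, Set.indicator_of_notMem ht, mul_zero, zero_add, mul_comm x]
            have hgx : ‖g t‖ ≤ x := le_of_lt (not_le.mp ht)
            exact mul_le_mul_of_nonneg_left hgx (sq_nonneg _)
        have h3 : (∫ t in Set.Ioc (0:ℝ) T,
              (C * S.indicator (fun t => ‖f t‖^2) t + x * ‖f t‖^2))
            = C * (∫ t in S ∩ Set.Ioc 0 T, ‖f t‖^2) + x * D T := by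
          rw [integral_add (hind.const_mul C) ((hf T).const_mul x),
            integral_const_mul, integral_const_mul]
          congr 1
          congr 1
          rw [integral_indicator hSm, Measure.restrict_restrict hSm]
        linarith [h1, h2.trans_eq h3]
      have hRT : R T ≤ C * ((∫ t in S ∩ Set.Ioc 0 T, ‖f t‖^2) / D T) + x := by
        have : R T = ‖∫ t in Set.Ioc (0:ℝ) T, (f t)^2 * g t‖ / D T := rfl
        rw [this, div_le_iff₀ hDpos']
        calc ‖∫ t in Set.Ioc (0:ℝ) T, (f t)^2 * g t‖
            ≤ C * (∫ t in S ∩ Set.Ioc 0 T, ‖f t‖^2) + x * D T := hint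
          _ = (C * ((∫ t in S ∩ Set.Ioc 0 T, ‖f t‖^2) / D T) + x) * D T := by
              field_simp
      linarith [hRT, le_of_lt hCr]
    have hlb : ∀ᶠ T in atTop, (0:ℝ) ≤ R T := by
      filter_upwards [hpos] with T hDpos
      exact div_nonneg (norm_nonneg _) (le_of_lt hDpos)
    exact limsup_le_of_le (isCoboundedUnder_le_of_eventually_le _ hlb) hev
  by_contra hcon
  push_neg at hcon
  have := key ((sSup A + limsup R atTop)/2) (by linarith)
  linarith
end

section
/- Fix k ∈ ℕ and σ ∈ (1/2, 1), and assume μ(1/2) < 1/k, i.e., there exists A > 0 such that ζ(r + iT) ≪ T^{(1-A)/k} uniformly for σ ≤ r ≤ 2 as T → ∞. Then for every real λ: lim_{T→∞} (1/T)∫_1^T ζ(σ+it)^k e^{-iλt} dt = d_k(n)/n^σ if λ = -log n for some positive integer n, and the limit is 0 otherwise. -/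
open MeasureTheory Filter

/-- `dk k n` is the `k`-fold divisor function. -/
noncomputable def dk (k n : ℕ) : ℕ := (ArithmeticFunction.zeta ^ k) n

open Complex LSeries.notation
open scoped ENNReal NNReal

section Part123
open ArithmeticFunction

/-- The complex-coefficient arithmetic function `ζ^k`. -/
noncomputable def zp (k : ℕ) : ArithmeticFunction ℂ :=
  (↑(ArithmeticFunction.zeta) : ArithmeticFunction ℂ) ^ k

lemma zp_eq (k : ℕ) : zp k = ↑(ArithmeticFunction.zeta ^ k) := by
  induction k with
  | zero => simp [zp, natCoe_one]
  | succ j ih => simp only [zp, pow_succ, natCoe_mul, ← ih]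

lemma zp_apply (k n : ℕ) : zp k n = (dk k n : ℂ) := by
  rw [zp_eq, natCoe_apply]; rfl

lemma zeta_coe_summable {s : ℂ} (hs : 1 < s.re) :
    LSeriesSummable ↗((↑(ArithmeticFunction.zeta) : ArithmeticFunction ℂ)) s := by
  have h0 : LSeriesSummable (fun n : ℕ => ((ArithmeticFunction.zeta n : ℕ) : ℂ)) s :=
    LSeriesSummable_zeta_iff.mpr hs
  have he : (fun n : ℕ => ((ArithmeticFunction.zeta n : ℕ) : ℂ))
      = ↗((↑(ArithmeticFunction.zeta) : ArithmeticFunction ℂ)) :=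
    funext fun n => (natCoe_apply).symm
  rw [← he]; exact h0

lemma zp_summable (k : ℕ) {s : ℂ} (hs : 1 < s.re) : LSeriesSummable ↗(zp k) s := by
  induction k with
  | zero =>
      have : ↗(zp 0) = ↗((1 : ArithmeticFunction ℂ)) := by
        simp only [zp, pow_zero]
      rw [this, ArithmeticFunction.one_eq_delta]
      refine Summable.congr (f := fun n => if n = 1 then (1:ℂ) else 0) ?_
        fun n => (LSeries.term_delta s n).symm
      exact summable_of_ne_finset_zero (s := {1}) (by intro n hn; simp at hn; simp [hn])
  | succ j ih =>
      have : ↗(zp (j+1)) = ↗(zp j * ↑(ArithmeticFunction.zeta)) := by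
        simp only [zp, pow_succ]
      rw [this]
      exact ArithmeticFunction.LSeriesSummable_mul ih (zeta_coe_summable hs)

lemma zp_LSeries (k : ℕ) {s : ℂ} (hs : 1 < s.re) :
    LSeries ↗(zp k) s = (riemannZeta s) ^ k := by
  induction k with
  | zero =>
      have : ↗(zp 0) = ↗((1 : ArithmeticFunction ℂ)) := by
        simp only [zp, pow_zero]
      rw [this, ArithmeticFunction.one_eq_delta, LSeries_delta, pow_zero, Pi.one_apply]
  | succ j ih =>
      have hLz : LSeries ↗((↑(ArithmeticFunction.zeta) : ArithmeticFunction ℂ)) s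
          = riemannZeta s := by
        rw [← LSeries_zeta_eq_riemannZeta hs]
        exact LSeries_congr (fun {n} _ => natCoe_apply) s
      have h1 : ↗(zp (j+1)) = ↗(zp j * ↑(ArithmeticFunction.zeta)) := by
        simp only [zp, pow_succ]
      rw [h1, ArithmeticFunction.LSeries_mul' (zp_summable j hs) (zeta_coe_summable hs),
        ih, hLz, pow_succ]

lemma term_eq (k : ℕ) {m : ℕ} (hm : m ≠ 0) (s : ℂ) :
    LSeries.term ↗(zp k) s m = (dk k m : ℂ) * Complex.exp (-(Real.log m : ℂ) * s) := by
  rw [LSeries.term_of_ne_zero hm, zp_apply]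
  rw [show ((m:ℂ) ^ s) = Complex.exp (Complex.log m * s) from
    Complex.cpow_def_of_ne_zero (by exact_mod_cast hm) s]
  rw [← Complex.natCast_log, div_eq_mul_inv, ← Complex.exp_neg, neg_mul]

/-- The real coefficient `dk k m / m^2` in exponential form. -/
noncomputable def cc (k m : ℕ) : ℝ := (dk k m) * Real.exp (-2 * Real.log m)

lemma cc_nonneg (k m : ℕ) : 0 ≤ cc k m :=
  mul_nonneg (Nat.cast_nonneg _) (Real.exp_pos _).le

lemma dk_zero (k : ℕ) : dk k 0 = 0 := by
  simp [dk, ArithmeticFunction.map_zero]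

lemma norm_term_eq_cc (k : ℕ) (m : ℕ) :
    ‖LSeries.term ↗(zp k) (2:ℂ) m‖ = cc k m := by
  rcases eq_or_ne m 0 with rfl | hm
  · simp [cc, dk_zero]
  · rw [term_eq k hm,
      show -(Real.log (m:ℕ) : ℂ) * 2 = ((-2 * Real.log m : ℝ) : ℂ) by push_cast; ring, norm_mul]
    simp only [Complex.norm_exp, Complex.norm_natCast, Complex.ofReal_re]
    rw [cc]

lemma cc_summable (k : ℕ) : Summable (cc k) := by
  have := (zp_summable k (s := (2:ℂ)) (by norm_num)).norm
  exact this.congr fun m => norm_term_eq_cc k m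

/-- pointwise expansion on the line Re = 2 -/
lemma zeta_pow_line (k : ℕ) (x t : ℝ) :
    (riemannZeta (2 + Complex.I * t)) ^ k * Complex.exp (Complex.I * x * t)
      = ∑' m, LSeries.term ↗(zp k) (2 + Complex.I * t) m * Complex.exp (Complex.I * x * t) := by
  rw [← zp_LSeries k (s := 2 + Complex.I * t) (by simp), LSeries, tsum_mul_right]

lemma term_mul_exp (k : ℕ) {m : ℕ} (hm : m ≠ 0) (x t : ℝ) :
    LSeries.term ↗(zp k) (2 + Complex.I * t) m * Complex.exp (Complex.I * x * t)
      = ((cc k m : ℂ)) * Complex.exp (Complex.I * ((x - Real.log m : ℝ) : ℂ) * t) := by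
  rw [term_eq k hm]
  have hcc : ((cc k m : ℝ) : ℂ) = (dk k m : ℂ) * Complex.exp (-2 * (Real.log m : ℂ)) := by
    rw [cc]; push_cast [Complex.ofReal_exp]; ring
  rw [hcc]
  conv_lhs => rw [mul_assoc, ← Complex.exp_add]
  conv_rhs => rw [mul_assoc, ← Complex.exp_add]
  congr 2
  push_cast
  ring

noncomputable def gg (k : ℕ) (x : ℝ) (m : ℕ) (t : ℝ) : ℂ :=
  LSeries.term ↗(zp k) (2 + Complex.I * t) m * Complex.exp (Complex.I * x * t)

lemma cc_zero (k : ℕ) : cc k 0 = 0 := by simp [cc, dk_zero]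

lemma norm_exp_I_mul (θ t : ℝ) : ‖Complex.exp (Complex.I * (θ:ℂ) * t)‖ = 1 := by
  rw [Complex.norm_exp]
  have : (Complex.I * (θ:ℂ) * t).re = 0 := by simp
  rw [this, Real.exp_zero]

lemma norm_gg (k : ℕ) (x : ℝ) (m : ℕ) (t : ℝ) : ‖gg k x m t‖ = cc k m := by
  rcases eq_or_ne m 0 with rfl | hm
  · simp [gg, cc_zero]
  · rw [gg, term_mul_exp k hm, norm_mul, norm_exp_I_mul, mul_one, Complex.norm_real,
      Real.norm_of_nonneg (cc_nonneg k m)]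

lemma gg_continuous (k : ℕ) (x : ℝ) (m : ℕ) : Continuous (gg k x m) := by
  rcases eq_or_ne m 0 with rfl | hm
  · have : gg k x 0 = fun _ => 0 := by
      funext t; simp [gg, LSeries.term_zero]
    rw [this]; exact continuous_const
  · have : gg k x m = fun t : ℝ =>
        ((cc k m : ℂ)) * Complex.exp (Complex.I * ((x - Real.log m : ℝ) : ℂ) * t) := by
      funext t; exact term_mul_exp k hm x t
    rw [this]
    fun_prop

lemma integral_gg_eq_tsum (k : ℕ) (x : ℝ) (T : ℝ) :
    (∫ t in Set.Ioc (1:ℝ) T, (riemannZeta (2 + Complex.I * t)) ^ k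
        * Complex.exp (Complex.I * x * t))
      = ∑' m, ∫ t in Set.Ioc (1:ℝ) T, gg k x m t := by
  rw [show (fun t : ℝ => (riemannZeta (2 + Complex.I * t)) ^ k
      * Complex.exp (Complex.I * x * t)) = fun t => ∑' m, gg k x m t from
    funext fun t => zeta_pow_line k x t]
  refine MeasureTheory.integral_tsum (fun m => (gg_continuous k x m).aestronglyMeasurable) ?_
  have h1 : ∀ m, (∫⁻ t in Set.Ioc (1:ℝ) T, ‖gg k x m t‖ₑ)
      = ENNReal.ofReal (cc k m) * volume (Set.Ioc (1:ℝ) T) := by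
    intro m
    have : (fun t => ‖gg k x m t‖ₑ) = fun _ => ENNReal.ofReal (cc k m) := by
      funext t
      rw [← ofReal_norm_eq_enorm, norm_gg]
    rw [this, MeasureTheory.setLIntegral_const]
  simp only [h1]
  rw [ENNReal.tsum_mul_right]
  refine ENNReal.mul_ne_top ?_ (by simp)
  rw [← ENNReal.ofReal_tsum_of_nonneg (cc_nonneg k) (cc_summable k)]
  exact ENNReal.ofReal_ne_top

lemma integral_gg_of_ne (k : ℕ) (x : ℝ) {m : ℕ} (hm : m ≠ 0) {T : ℝ} (hT : 1 ≤ T)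
    (hθ : x - Real.log m ≠ 0) :
    ∫ t in Set.Ioc (1:ℝ) T, gg k x m t
      = (cc k m : ℂ) * ((Complex.exp (Complex.I * ((x - Real.log m : ℝ):ℂ) * T)
          - Complex.exp (Complex.I * ((x - Real.log m : ℝ):ℂ)))
          / (Complex.I * ((x - Real.log m : ℝ):ℂ))) := by
  set θ : ℝ := x - Real.log m with hθdef
  have hgg : ∀ t : ℝ, gg k x m t = (cc k m : ℂ) * Complex.exp ((Complex.I * (θ:ℂ)) * t) := by
    intro t
    rw [gg, term_mul_exp k hm x t, mul_assoc]
  have hc : Complex.I * (θ:ℂ) ≠ 0 :=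
    mul_ne_zero Complex.I_ne_zero (by exact_mod_cast hθ)
  rw [← intervalIntegral.integral_of_le hT]
  calc ∫ t in (1:ℝ)..T, gg k x m t
      = ∫ t in (1:ℝ)..T, (cc k m : ℂ) * Complex.exp ((Complex.I * (θ:ℂ)) * t) := by
        exact intervalIntegral.integral_congr fun t _ => hgg t
    _ = (cc k m : ℂ) * ∫ t in (1:ℝ)..T, Complex.exp ((Complex.I * (θ:ℂ)) * t) := by
        exact intervalIntegral.integral_const_mul _ _
    _ = _ := by
        rw [integral_exp_mul_complex hc]
        rw [mul_assoc, mul_assoc]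
        norm_num

lemma integral_gg_main (k : ℕ) (x : ℝ) {n : ℕ} (hx : n ≠ 0 → x = Real.log n) {T : ℝ}
    (hT : 1 ≤ T) :
    ∫ t in Set.Ioc (1:ℝ) T, gg k x n t = (cc k n : ℂ) * (T - 1) := by
  rcases eq_or_ne n 0 with rfl | hn
  · have : ∀ t : ℝ, gg k x 0 t = 0 := by intro t; simp [gg, LSeries.term_zero]
    simp [this, cc_zero]
  · have hθ : x - Real.log n = 0 := by rw [hx hn]; ring
    have hgg : ∀ t : ℝ, gg k x n t = (cc k n : ℂ) := by
      intro t
      rw [gg, term_mul_exp k hn x t, hθ]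
      norm_num
    simp only [hgg]
    rw [MeasureTheory.setIntegral_const, measureReal_def, Real.volume_Ioc,
      ENNReal.toReal_ofReal (by linarith), Complex.real_smul]
    push_cast
    ring

lemma norm_integral_gg_le (k : ℕ) (x : ℝ) (m : ℕ) {T : ℝ} (hT : 1 ≤ T) :
    ‖∫ t in Set.Ioc (1:ℝ) T, gg k x m t‖ ≤ cc k m * (T - 1) := by
  have : ‖∫ t in Set.Ioc (1:ℝ) T, gg k x m t‖
      ≤ cc k m * (volume (Set.Ioc (1:ℝ) T)).toReal :=
    MeasureTheory.norm_setIntegral_le_of_norm_le_const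
      (by rw [Real.volume_Ioc]; exact ENNReal.ofReal_lt_top)
      (fun t _ => le_of_eq (norm_gg k x m t))
  calc ‖∫ t in Set.Ioc (1:ℝ) T, gg k x m t‖
      ≤ cc k m * (volume (Set.Ioc (1:ℝ) T)).toReal := this
    _ = cc k m * (T - 1) := by
        rw [Real.volume_Ioc, ENNReal.toReal_ofReal (by linarith)]

lemma integral_gg_summable (k : ℕ) (x : ℝ) {T : ℝ} (hT : 1 ≤ T) :
    Summable (fun m => ∫ t in Set.Ioc (1:ℝ) T, gg k x m t) := by
  refine Summable.of_norm_bounded (g := fun m => cc k m * (T - 1)) ?_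
    (fun m => norm_integral_gg_le k x m hT)
  exact (cc_summable k).mul_right _

lemma B_bound (k : ℕ) (x : ℝ) (n : ℕ) (hx : n ≠ 0 → x = Real.log n)
    (hx' : ∀ m : ℕ, m ≠ 0 → m ≠ n → x ≠ Real.log m)
    {c : ℝ} (hc : 0 < c) (hcle : ∀ m : ℕ, m ≠ 0 → m ≠ n → c ≤ |x - Real.log m|)
    {T : ℝ} (hT : 1 ≤ T) :
    ‖(∫ t in Set.Ioc (1:ℝ) T, (riemannZeta (2 + Complex.I * t)) ^ k
        * Complex.exp (Complex.I * x * t)) - (cc k n : ℂ) * (T - 1)‖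
      ≤ 2 / c * ∑' m, cc k m := by
  classical
  rw [integral_gg_eq_tsum k x T,
    Summable.tsum_eq_add_tsum_ite (integral_gg_summable k x hT) n, integral_gg_main k x hx hT,
    add_sub_cancel_left]
  have hbound : ∀ m : ℕ,
      ‖(if m = n then 0 else ∫ t in Set.Ioc (1:ℝ) T, gg k x m t)‖ ≤ 2 / c * cc k m := by
    intro m
    rcases eq_or_ne m n with rfl | hmn
    · rw [if_pos rfl, norm_zero]
      exact mul_nonneg (div_nonneg (by norm_num) hc.le) (cc_nonneg k m)
    · rw [if_neg hmn]
      rcases eq_or_ne m 0 with rfl | hm0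
      · have : ∀ t : ℝ, gg k x 0 t = 0 := by intro t; simp [gg, LSeries.term_zero]
        simp only [this, integral_zero, norm_zero]
        exact mul_nonneg (div_nonneg (by norm_num) hc.le) (cc_nonneg k 0)
      · have hθ : x - Real.log m ≠ 0 := sub_ne_zero.mpr (hx' m hm0 hmn)
        rw [integral_gg_of_ne k x hm0 hT hθ, norm_mul]
        have h2 : ‖(Complex.exp (Complex.I * ((x - Real.log m : ℝ):ℂ) * T)
            - Complex.exp (Complex.I * ((x - Real.log m : ℝ):ℂ)))
            / (Complex.I * ((x - Real.log m : ℝ):ℂ))‖ ≤ 2 / c := by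
          rw [norm_div, norm_mul]
          have hnum : ‖Complex.exp (Complex.I * ((x - Real.log m : ℝ):ℂ) * T)
              - Complex.exp (Complex.I * ((x - Real.log m : ℝ):ℂ))‖ ≤ 2 := by
            refine le_trans (norm_sub_le _ _) ?_
            have e1 := norm_exp_I_mul (x - Real.log m) T
            have e2 : ‖Complex.exp (Complex.I * ((x - Real.log m : ℝ):ℂ))‖ = 1 := by
              have := norm_exp_I_mul (x - Real.log m) 1
              simpa using this
            rw [e1, e2]; norm_num
          have hden : ‖Complex.I‖ * ‖((x - Real.log m : ℝ):ℂ)‖ = |x - Real.log m| := by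
            rw [Complex.norm_I, one_mul, Complex.norm_real, Real.norm_eq_abs]
          rw [hden]
          have habs : (0:ℝ) < |x - Real.log m| := abs_pos.mpr hθ
          refine le_trans ((div_le_div_iff_of_pos_right habs).mpr hnum) ?_
          exact div_le_div_of_nonneg_left (by norm_num) hc (hcle m hm0 hmn)
        calc ‖(cc k m : ℂ)‖ * ‖_‖ ≤ cc k m * (2 / c) := by
              apply mul_le_mul_of_nonneg_left h2 ?_ |>.trans_eq ?_
              · rw [Complex.norm_real]; exact abs_nonneg _
              · rw [Complex.norm_real, Real.norm_of_nonneg (cc_nonneg k m)]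
          _ = 2 / c * cc k m := by ring
  refine le_trans (norm_tsum_le_tsum_norm ?_) ?_
  · refine Summable.of_nonneg_of_le (fun m => norm_nonneg _) hbound ?_
    exact (cc_summable k).mul_left _
  · rw [← tsum_mul_left]
    refine Summable.tsum_le_tsum hbound ?_ ?_
    · refine Summable.of_nonneg_of_le (fun m => norm_nonneg _) hbound ?_
      exact (cc_summable k).mul_left _
    · exact (cc_summable k).mul_left _

lemma B_tendsto (k : ℕ) (x : ℝ) (n : ℕ) (hx : n ≠ 0 → x = Real.log n)
    (hx' : ∀ m : ℕ, m ≠ 0 → m ≠ n → x ≠ Real.log m)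
    {c : ℝ} (hc : 0 < c) (hcle : ∀ m : ℕ, m ≠ 0 → m ≠ n → c ≤ |x - Real.log m|) :
    Tendsto (fun T : ℝ => (∫ t in Set.Ioc (1:ℝ) T, (riemannZeta (2 + Complex.I * t)) ^ k
        * Complex.exp (Complex.I * x * t)) / T) atTop (nhds ((cc k n : ℂ))) := by
  set B : ℝ → ℂ := fun T => ∫ t in Set.Ioc (1:ℝ) T, (riemannZeta (2 + Complex.I * t)) ^ k
    * Complex.exp (Complex.I * x * t) with hB
  have key : ∀ T : ℝ, B T / T
      = (cc k n : ℂ) * ((T - 1) / T) + (B T - (cc k n : ℂ) * (T - 1)) / T := by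
    intro T; push_cast; ring
  rw [show (fun T : ℝ => B T / T) = fun T : ℝ =>
      (cc k n : ℂ) * (((T:ℂ) - 1) / T) + (B T - (cc k n : ℂ) * (T - 1)) / T from
    funext key]
  have h1 : Tendsto (fun T : ℝ => (cc k n : ℂ) * (((T:ℂ) - 1) / T)) atTop
      (nhds ((cc k n : ℂ))) := by
    have hr : Tendsto (fun T : ℝ => ((T - 1) / T : ℝ)) atTop (nhds 1) := by
      have h2 : Tendsto (fun T : ℝ => 1 - T⁻¹) atTop (nhds (1 - 0)) :=
        tendsto_const_nhds.sub tendsto_inv_atTop_zero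
      rw [sub_zero] at h2
      refine h2.congr' ?_
      filter_upwards [eventually_gt_atTop (0:ℝ)] with T hT
      field_simp
    have hc2 : Tendsto (fun T : ℝ => (((T - 1) / T : ℝ) : ℂ)) atTop (nhds ((1:ℝ):ℂ)) :=
      (Complex.continuous_ofReal.tendsto _).comp hr
    have := hc2.const_mul ((cc k n : ℂ))
    simp only [Complex.ofReal_one, mul_one] at this
    refine this.congr fun T => ?_
    push_cast
    ring
  have h2 : Tendsto (fun T : ℝ => (B T - (cc k n : ℂ) * (T - 1)) / T) atTop (nhds 0) := by
    have hbd : ∀ᶠ T : ℝ in atTop, ‖(B T - (cc k n : ℂ) * (T - 1)) / T‖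
        ≤ (2 / c * ∑' m, cc k m) / T := by
      filter_upwards [eventually_ge_atTop (1:ℝ)] with T hT
      rw [norm_div, Complex.norm_real, Real.norm_of_nonneg (by linarith)]
      have hb := B_bound k x n hx hx' hc hcle hT
      gcongr
    refine squeeze_zero_norm' hbd ?_
    exact Filter.Tendsto.div_atTop
      (f := fun _ : ℝ => 2 / c * ∑' m, cc k m) tendsto_const_nhds tendsto_id
  simpa using h1.add h2

end Part123

lemma gap (x : ℝ) (n : ℕ) (hx' : ∀ m : ℕ, m ≠ 0 → m ≠ n → x ≠ Real.log m) :
    ∃ c : ℝ, 0 < c ∧ ∀ m : ℕ, m ≠ 0 → m ≠ n → c ≤ |x - Real.log m| := by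
  classical
  set N : ℕ := ⌈Real.exp (x + 1)⌉₊ + 1 with hN
  set F : Finset ℕ := (Finset.range N).filter (fun m => m ≠ 0 ∧ m ≠ n) with hF
  set S : Finset ℝ := insert (1:ℝ) (F.image (fun m : ℕ => |x - Real.log (m:ℝ)|)) with hS
  have hSne : S.Nonempty := ⟨1, Finset.mem_insert_self _ _⟩
  refine ⟨S.min' hSne, ?_, ?_⟩
  · have hmem := S.min'_mem hSne
    rcases Finset.mem_insert.mp hmem with h1 | h2
    · rw [h1]; norm_num
    · obtain ⟨m, hmF, hval⟩ := Finset.mem_image.mp h2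
      have hmf := Finset.mem_filter.mp hmF
      obtain ⟨hm0, hmn⟩ := hmf.2
      rw [← hval]
      exact abs_pos.mpr (sub_ne_zero.mpr (hx' m hm0 hmn))
  · intro m hm0 hmn
    by_cases hmN : m < N
    · refine Finset.min'_le S _ ?_
      exact Finset.mem_insert_of_mem (Finset.mem_image_of_mem _
        (Finset.mem_filter.mpr ⟨Finset.mem_range.mpr hmN, hm0, hmn⟩))
    · have h1S : S.min' hSne ≤ 1 := Finset.min'_le S 1 (Finset.mem_insert_self _ _)
      refine le_trans h1S ?_
      push_neg at hmN
      have hm : Real.exp (x + 1) ≤ (m : ℝ) := by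
        have h1 : Real.exp (x+1) ≤ (⌈Real.exp (x + 1)⌉₊ : ℝ) := Nat.le_ceil _
        have h2 : ((⌈Real.exp (x + 1)⌉₊ : ℕ) : ℝ) ≤ (m : ℝ) := by
          exact_mod_cast le_trans (Nat.le_succ _) hmN
        linarith
      have hlog : x + 1 ≤ Real.log m := by
        have := Real.log_le_log (Real.exp_pos _) hm
        rwa [Real.log_exp] at this
      rw [abs_sub_comm]
      refine le_trans ?_ (le_abs_self _)
      linarith

lemma main_prop (k : ℕ) (hk : 0 < k) (σ : ℝ) (hσ : 1/2 < σ ∧ σ < 1)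
    (hμ : ∃ A > (0:ℝ), ∃ C : ℝ, ∀ T : ℝ, 2 ≤ T → ∀ r ∈ Set.Icc σ 2,
      ‖riemannZeta (r + Complex.I * T)‖ ≤ C * T ^ ((1 - A) / k))
    (x : ℝ) (n : ℕ) (hx : n ≠ 0 → x = Real.log n)
    (hx' : ∀ m : ℕ, m ≠ 0 → m ≠ n → x ≠ Real.log m) :
    Tendsto (fun T : ℝ => (∫ t in Set.Ioc (1:ℝ) T,
        (riemannZeta (σ + Complex.I * t)) ^ k * Complex.exp (Complex.I * x * t)) / T)
      atTop (nhds (Complex.exp ((x:ℂ) * (2 - σ)) * (cc k n : ℂ))) := by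
  obtain ⟨A, hA, C, hC⟩ := hμ
  have hσ2 : σ < 2 := by linarith [hσ.2]
  have hσ0 : 0 < σ := by linarith [hσ.1]
  set f : ℂ → ℂ := fun s => (riemannZeta s) ^ k * Complex.exp ((x:ℂ) * (s - σ)) with hf
  set H : ℝ → ℂ := fun u => ∫ r in σ..(2:ℝ), f (r + u * Complex.I) with hH
  set B : ℝ → ℂ := fun T => ∫ t in Set.Ioc (1:ℝ) T,
    (riemannZeta (2 + Complex.I * t)) ^ k * Complex.exp (Complex.I * x * t) with hB
  -- the rectangle identity
  have rect : ∀ T : ℝ, 1 ≤ T →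
      (∫ t in Set.Ioc (1:ℝ) T, (riemannZeta (σ + Complex.I * t)) ^ k
          * Complex.exp (Complex.I * x * t))
        = Complex.exp ((x:ℂ) * (2 - σ)) * B T + (H 1 - H T) * Complex.I⁻¹ := by
    intro T hT
    have hdiff : DifferentiableOn ℂ f (Set.uIcc σ 2 ×ℂ Set.uIcc 1 T) := by
      intro s hs
      have hs1 : s ≠ 1 := by
        intro h
        rw [Complex.mem_reProdIm] at hs
        have h2 := hs.2
        rw [h, Set.uIcc_of_le hT] at h2
        simp only [Complex.one_im] at h2
        exact absurd h2.1 (by norm_num)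
      refine DifferentiableAt.differentiableWithinAt ?_
      exact ((differentiableAt_riemannZeta hs1).pow k).mul
        (((differentiableAt_id.sub_const _).const_mul _).cexp)
    have EQ := Complex.integral_boundary_rect_eq_zero_of_differentiableOn f
      ((σ:ℂ) + Complex.I) (2 + T * Complex.I) (by
        have h1 : ((σ:ℂ) + Complex.I).re = σ := by simp
        have h2 : ((σ:ℂ) + Complex.I).im = 1 := by simp
        have h3 : ((2:ℂ) + T * Complex.I).re = 2 := by simp
        have h4 : ((2:ℂ) + T * Complex.I).im = T := by simp
        rw [h1, h2, h3, h4]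
        exact hdiff)
    have h1 : ((σ:ℂ) + Complex.I).re = σ := by simp
    have h2 : ((σ:ℂ) + Complex.I).im = 1 := by simp
    have h3 : ((2:ℂ) + T * Complex.I).re = 2 := by simp
    have h4 : ((2:ℂ) + T * Complex.I).im = T := by simp
    rw [h1, h2, h3, h4] at EQ
    -- name the four integrals
    set Vσ : ℂ := ∫ y in (1:ℝ)..T, f (σ + y * Complex.I) with hVσ
    set V2 : ℂ := ∫ y in (1:ℝ)..T, f (2 + y * Complex.I) with hV2
    have hEQ2 : H 1 - H T + Complex.I * V2 - Complex.I * Vσ = 0 := by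
      simpa only [smul_eq_mul, hH, hV2, Complex.ofReal_one, Complex.ofReal_ofNat] using EQ
    have hVs : Vσ = V2 + (H 1 - H T) * Complex.I⁻¹ := by
      have hI : (Complex.I : ℂ) ≠ 0 := Complex.I_ne_zero
      have hmul : Complex.I * Vσ = Complex.I * V2 + (H 1 - H T) := by
        linear_combination -hEQ2
      calc Vσ = Complex.I⁻¹ * (Complex.I * Vσ) := by
              rw [← mul_assoc, inv_mul_cancel₀ hI, one_mul]
        _ = Complex.I⁻¹ * (Complex.I * V2 + (H 1 - H T)) := by rw [hmul]
        _ = V2 + (H 1 - H T) * Complex.I⁻¹ := by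
              rw [mul_add, ← mul_assoc, inv_mul_cancel₀ hI, one_mul]; ring
    -- identify Vσ with the statement integral
    have hVσ_eq : Vσ = ∫ t in Set.Ioc (1:ℝ) T, (riemannZeta (σ + Complex.I * t)) ^ k
        * Complex.exp (Complex.I * x * t) := by
      rw [hVσ, intervalIntegral.integral_of_le hT]
      refine MeasureTheory.setIntegral_congr_fun measurableSet_Ioc fun t _ => ?_
      rw [hf]
      have harg : (σ:ℂ) + (t:ℝ) * Complex.I = (σ:ℂ) + Complex.I * t := by ring
      rw [harg]
      congr 1
      congr 1
      ring
    -- identify V2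
    have hV2_eq : V2 = Complex.exp ((x:ℂ) * (2 - σ)) * B T := by
      rw [hV2, hB, intervalIntegral.integral_of_le hT, ← MeasureTheory.integral_const_mul]
      refine MeasureTheory.setIntegral_congr_fun measurableSet_Ioc fun t _ => ?_
      rw [hf]
      have harg : (2:ℂ) + (t:ℝ) * Complex.I = (2:ℂ) + Complex.I * t := by ring
      rw [harg, ← mul_assoc, mul_comm (Complex.exp _) ((riemannZeta _)^k), mul_assoc,
        ← Complex.exp_add]
      congr 2
      ring
    rw [← hVσ_eq, hVs, hV2_eq]
  -- bound on the horizontal segment at height T ≥ 2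
  have hC0 : 0 ≤ C := by
    have h := hC 2 le_rfl 2 ⟨hσ2.le, le_rfl⟩
    have hp : (0:ℝ) < (2:ℝ) ^ ((1 - A) / k) := Real.rpow_pos_of_pos (by norm_num) _
    nlinarith [norm_nonneg (riemannZeta ((2:ℝ) + Complex.I * (2:ℝ)))]
  set E : ℝ := Real.exp (|x| * 2) with hE
  have hE0 : 0 < E := Real.exp_pos _
  have Hbound : ∀ T : ℝ, 2 ≤ T → ‖H T‖ ≤ C ^ k * T ^ (1 - A) * E * (2 - σ) := by
    intro T hT2
    have hTpos : (0:ℝ) < T := by linarith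
    have key : ∀ r ∈ Set.uIoc σ (2:ℝ), ‖f (r + T * Complex.I)‖
        ≤ C ^ k * T ^ (1 - A) * E := by
      intro r hr
      rw [Set.uIoc_of_le hσ2.le] at hr
      have hrI : r ∈ Set.Icc σ 2 := ⟨hr.1.le, hr.2⟩
      have hζ : ‖riemannZeta ((r:ℂ) + Complex.I * T)‖ ≤ C * T ^ ((1 - A) / k) :=
        hC T hT2 r hrI
      have harg : (r:ℂ) + (T:ℝ) * Complex.I = (r:ℂ) + Complex.I * T := by ring
      rw [hf]
      simp only [harg]
      rw [norm_mul, norm_pow]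
      have hzk : ‖riemannZeta ((r:ℂ) + Complex.I * T)‖ ^ k
          ≤ C ^ k * T ^ (1 - A) := by
        have h1 : ‖riemannZeta ((r:ℂ) + Complex.I * T)‖ ^ k
            ≤ (C * T ^ ((1 - A) / k)) ^ k := by
          exact pow_le_pow_left₀ (norm_nonneg _) hζ k
        refine h1.trans_eq ?_
        rw [mul_pow]
        congr 1
        rw [← Real.rpow_natCast (T ^ ((1 - A) / k)) k, ← Real.rpow_mul hTpos.le]
        congr 1
        field_simp
      have hexp : ‖Complex.exp ((x:ℂ) * (((r:ℂ) + Complex.I * T) - σ))‖ ≤ E := by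
        rw [Complex.norm_exp, hE, Real.exp_le_exp]
        have hre : ((x:ℂ) * (((r:ℂ) + Complex.I * T) - σ)).re = x * (r - σ) := by
          simp [Complex.mul_re]
        rw [hre]
        calc x * (r - σ) ≤ |x * (r - σ)| := le_abs_self _
          _ = |x| * |r - σ| := abs_mul _ _
          _ ≤ |x| * 2 := by
              refine mul_le_mul_of_nonneg_left ?_ (abs_nonneg _)
              rw [_root_.abs_of_nonneg (by linarith [hr.1] : (0:ℝ) ≤ r - σ)]
              linarith [hr.2]
      calc ‖riemannZeta ((r:ℂ) + Complex.I * T)‖ ^ k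
            * ‖Complex.exp ((x:ℂ) * (((r:ℂ) + Complex.I * T) - σ))‖
          ≤ (C ^ k * T ^ (1 - A)) * E := by
            refine mul_le_mul hzk hexp (norm_nonneg _) ?_
            positivity
        _ = C ^ k * T ^ (1 - A) * E := by ring
    have := intervalIntegral.norm_integral_le_of_norm_le_const key
    refine this.trans_eq ?_
    rw [_root_.abs_of_nonneg (by linarith : (0:ℝ) ≤ 2 - σ)]
  -- error term tends to zero
  have herr : Tendsto (fun T : ℝ => (H 1 - H T) * Complex.I⁻¹ / T) atTop (nhds 0) := by
    have hbd : ∀ᶠ T : ℝ in atTop, ‖(H 1 - H T) * Complex.I⁻¹ / T‖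
        ≤ ‖H 1‖ * T⁻¹ + (C ^ k * E * (2 - σ)) * T ^ (-A) := by
      filter_upwards [eventually_ge_atTop (2:ℝ)] with T hT2
      have hTpos : (0:ℝ) < T := by linarith
      have hnorm : ‖(H 1 - H T) * Complex.I⁻¹ / T‖ = ‖H 1 - H T‖ / T := by
        rw [norm_div, norm_mul, norm_inv, Complex.norm_I, inv_one, mul_one,
          Complex.norm_real, Real.norm_of_nonneg hTpos.le]
      rw [hnorm]
      have h1 : ‖H 1 - H T‖ ≤ ‖H 1‖ + C ^ k * T ^ (1 - A) * E * (2 - σ) :=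
        le_trans (norm_sub_le _ _) (by linarith [Hbound T hT2])
      have hTA : T ^ (1 - A) / T = T ^ (-A) := by
        rw [show (1 - A) = 1 + (-A) by ring, Real.rpow_add hTpos, Real.rpow_one]
        field_simp
      calc ‖H 1 - H T‖ / T ≤ (‖H 1‖ + C ^ k * T ^ (1 - A) * E * (2 - σ)) / T := by
            gcongr
        _ = ‖H 1‖ * T⁻¹ + (C ^ k * E * (2 - σ)) * (T ^ (1 - A) / T) := by
            field_simp
        _ = ‖H 1‖ * T⁻¹ + (C ^ k * E * (2 - σ)) * T ^ (-A) := by rw [hTA]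
    have hlim : Tendsto (fun T : ℝ => ‖H 1‖ * T⁻¹ + (C ^ k * E * (2 - σ)) * T ^ (-A))
        atTop (nhds 0) := by
      have l1 : Tendsto (fun T : ℝ => ‖H 1‖ * T⁻¹) atTop (nhds 0) := by
        simpa using tendsto_inv_atTop_zero.const_mul (‖H 1‖)
      have l2 : Tendsto (fun T : ℝ => (C ^ k * E * (2 - σ)) * T ^ (-A)) atTop (nhds 0) := by
        simpa using (tendsto_rpow_neg_atTop hA).const_mul (C ^ k * E * (2 - σ))
      simpa using l1.add l2
    exact squeeze_zero_norm' hbd hlim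
  -- limit of the main term
  obtain ⟨c, hc, hcle⟩ := gap x n hx'
  have hmain : Tendsto (fun T : ℝ => Complex.exp ((x:ℂ) * (2 - σ)) * (B T / T)) atTop
      (nhds (Complex.exp ((x:ℂ) * (2 - σ)) * (cc k n : ℂ))) :=
    (B_tendsto k x n hx hx' hc hcle).const_mul _
  -- combine
  have hcongr : ∀ᶠ T : ℝ in atTop,
      Complex.exp ((x:ℂ) * (2 - σ)) * (B T / T) + (H 1 - H T) * Complex.I⁻¹ / T
        = (∫ t in Set.Ioc (1:ℝ) T, (riemannZeta (σ + Complex.I * t)) ^ k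
            * Complex.exp (Complex.I * x * t)) / T := by
    filter_upwards [eventually_ge_atTop (1:ℝ)] with T hT1
    rw [rect T hT1]
    ring
  have := hmain.add herr
  rw [add_zero] at this
  exact Tendsto.congr' hcongr this


theorem stmt7 (k : ℕ) (hk : 0 < k) (σ : ℝ) (hσ : 1/2 < σ ∧ σ < 1)
    (hμ : ∃ A > (0:ℝ), ∃ C : ℝ, ∀ T : ℝ, 2 ≤ T → ∀ r ∈ Set.Icc σ 2,
      ‖riemannZeta (r + Complex.I * T)‖ ≤ C * T ^ ((1 - A) / k))
    (l : ℝ) :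
    (∀ n : ℕ, 0 < n → l = -Real.log n →
      Tendsto (fun T : ℝ => (∫ t in Set.Ioc (1:ℝ) T,
          (riemannZeta (σ + Complex.I * t))^k * Complex.exp (-Complex.I * l * t)) / T)
        atTop (nhds ((dk k n : ℂ) / (n : ℂ) ^ (σ : ℂ)))) ∧
    ((∀ n : ℕ, 0 < n → l ≠ -Real.log n) →
      Tendsto (fun T : ℝ => (∫ t in Set.Ioc (1:ℝ) T,
          (riemannZeta (σ + Complex.I * t))^k * Complex.exp (-Complex.I * l * t)) / T)
        atTop (nhds 0)) := by
  have hfun : (fun T : ℝ => (∫ t in Set.Ioc (1:ℝ) T,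
        (riemannZeta (σ + Complex.I * t))^k * Complex.exp (-Complex.I * l * t)) / T)
      = (fun T : ℝ => (∫ t in Set.Ioc (1:ℝ) T,
        (riemannZeta (σ + Complex.I * t))^k * Complex.exp (Complex.I * ((-l : ℝ):ℂ) * t)) / T) := by
    funext T
    congr 1
    refine MeasureTheory.setIntegral_congr_fun measurableSet_Ioc fun t _ => ?_
    congr 1
    congr 1
    push_cast
    ring
  constructor
  · intro n hn hl
    have hn0 : n ≠ 0 := hn.ne'
    have hxn : (-l : ℝ) = Real.log n := by rw [hl]; ring
    have hx : n ≠ 0 → (-l : ℝ) = Real.log n := fun _ => hxn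
    have hx' : ∀ m : ℕ, m ≠ 0 → m ≠ n → (-l : ℝ) ≠ Real.log m := by
      intro m hm0 hmn hxm
      apply hmn
      have h1 : Real.log (m:ℝ) = Real.log (n:ℝ) := by rw [← hxm, hxn]
      have h2 : (m:ℝ) = (n:ℝ) := by
        have := congrArg Real.exp h1
        rwa [Real.exp_log (by exact_mod_cast Nat.pos_of_ne_zero hm0),
          Real.exp_log (by exact_mod_cast hn)] at this
      exact_mod_cast h2
    have hmp := main_prop k hk σ hσ hμ (-l) n hx hx'
    rw [hfun]
    have hne : (n:ℂ) ≠ 0 := Nat.cast_ne_zero.mpr hn0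
    have hval : Complex.exp (((-l : ℝ):ℂ) * (2 - σ)) * (cc k n : ℂ)
        = (dk k n : ℂ) / (n : ℂ) ^ (σ : ℂ) := by
      rw [show ((n:ℂ)) ^ ((σ:ℝ):ℂ) = Complex.exp ((Real.log n : ℂ) * σ) by
        rw [Complex.cpow_def_of_ne_zero hne, Complex.natCast_log]]
      rw [div_eq_mul_inv, ← Complex.exp_neg]
      have hcc : (cc k n : ℂ) = (dk k n : ℂ)
          * Complex.exp (((-2 * Real.log n : ℝ)) : ℂ) := by
        rw [cc]; push_cast [Complex.ofReal_exp]; ring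
      rw [hcc, hxn, mul_comm, mul_assoc, ← Complex.exp_add]
      congr 1
      push_cast
      ring
    rw [← hval]
    exact hmp
  · intro hl
    have hx : (0:ℕ) ≠ 0 → (-l : ℝ) = Real.log ((0:ℕ):ℝ) := fun h => absurd rfl h
    have hx' : ∀ m : ℕ, m ≠ 0 → m ≠ 0 → (-l : ℝ) ≠ Real.log m := by
      intro m hm0 _ hxm
      exact hl m (Nat.pos_of_ne_zero hm0) (by rw [← hxm]; ring)
    have hmp := main_prop k hk σ hσ hμ (-l) 0 hx hx'
    rw [hfun]
    rw [cc_zero] at hmp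
    simpa using hmp
end

section
/- Let A² be the space of (equivalence classes of) locally square-integrable functions f on ℝ≥0 for which the Fourier coefficients ⟨f, e_λ⟩ = lim_{T→∞} (1/T)∫_0^T f(t) e^{-iλt} dt exist for all λ ∈ ℝ and satisfy Σ_λ |⟨f,e_λ⟩|² < ∞, where f ~ g iff ⟨f-g, e_λ⟩ = 0 for all λ. Then A² with inner product ⟨f,g⟩_{A²} = Σ_λ ⟨f,e_λ⟩ conj(⟨g,e_λ⟩) is a Hilbert space, and every element of A² decomposes as φ + g with g ∈ B² and ⟨φ, e_λ⟩ = 0 for all λ. -/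
open MeasureTheory Filter

/-- A trigonometric polynomial. -/
def TrigPoly (p : ℝ → ℂ) : Prop :=
  ∃ (s : Finset ℝ) (c : ℝ → ℂ), ∀ t : ℝ, p t = ∑ l ∈ s, c l * Complex.exp (Complex.I * l * t)

/-- The square of the Besicovitch seminorm. -/
noncomputable def BnormSq (f : ℝ → ℂ) : ℝ :=
  limsup (fun T : ℝ => (∫ t in Set.Ioc (0:ℝ) T, ‖f t‖^2) / T) atTop

/-- Membership in the Besicovitch space `B²`. -/
def InB2 (f : ℝ → ℂ) : Prop :=
  ∀ ε > (0:ℝ), ∃ p : ℝ → ℂ, TrigPoly p ∧ BnormSq (fun t => f t - p t) < ε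

/-- The Fourier coefficient of `f` at frequency `l` exists and equals `c`. -/
def HasFourierCoeff (f : ℝ → ℂ) (l : ℝ) (c : ℂ) : Prop :=
  Tendsto (fun T : ℝ => (∫ t in Set.Ioc (0:ℝ) T, f t * Complex.exp (-Complex.I * l * t)) / T)
    atTop (nhds c)

namespace S11
open intervalIntegral



lemma norm_exp_I_mul (μ t : ℝ) : ‖Complex.exp (Complex.I * μ * t)‖ = 1 := by
  rw [Complex.norm_exp]
  simp [Complex.mul_re, Complex.mul_im]

lemma int_exp_len {μ a b : ℝ} (hab : a ≤ b) :
    ‖∫ t in a..b, Complex.exp (Complex.I * μ * t)‖ ≤ b - a := by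
  have h := intervalIntegral.norm_integral_le_of_norm_le_const
    (C := 1) (f := fun t : ℝ => Complex.exp (Complex.I * μ * t)) (a := a) (b := b)
    (fun x _ => le_of_eq (norm_exp_I_mul μ x))
  rw [abs_of_nonneg (by linarith)] at h
  linarith

lemma int_exp_div {μ : ℝ} (hμ : μ ≠ 0) (a b : ℝ) :
    ‖∫ t in a..b, Complex.exp (Complex.I * μ * t)‖ ≤ 2 / |μ| := by
  have hc : (Complex.I * μ : ℂ) ≠ 0 := by
    simp [Complex.I_ne_zero, Complex.ofReal_eq_zero, hμ]
  have h : (∫ t in a..b, Complex.exp (Complex.I * μ * t))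
      = (Complex.exp (Complex.I * μ * b) - Complex.exp (Complex.I * μ * a)) / (Complex.I * μ) := by
    simpa [mul_assoc] using integral_exp_mul_complex (a := a) (b := b) hc
  rw [h, norm_div]
  have h1 : ‖Complex.exp (Complex.I * μ * b) - Complex.exp (Complex.I * μ * a)‖ ≤ 2 := by
    calc _ ≤ ‖Complex.exp (Complex.I * μ * b)‖ + ‖Complex.exp (Complex.I * μ * a)‖ :=
            norm_sub_le _ _
    _ ≤ 2 := by rw [norm_exp_I_mul, norm_exp_I_mul]; norm_num
  have h2 : ‖(Complex.I * μ : ℂ)‖ = |μ| := by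
    simp [Complex.norm_real]
  rw [h2]
  have hpos : 0 < |μ| := abs_pos.mpr hμ
  gcongr
  

noncomputable section

variable (c : ℝ → ℂ) (e : ℕ → ℝ) (v : ℕ → Finset ℝ)

def s (n : ℕ) : Finset ℝ :=
  (Finset.range (n+1)).biUnion (fun j => Finset.image e (Finset.range j) ∪ v j)

def D (u : Finset ℝ) : ℝ := ∑ l ∈ u, ‖c l‖

def gap (u : Finset ℝ) : ℝ :=
  (insert (1:ℝ) (u.offDiag.image (fun q => |q.1 - q.2|))).min' (Finset.insert_nonempty _ _)

def W (u : Finset ℝ) : ℝ := (D c u + (D c u)^2 + 1) * (4 / gap u)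

def Q (n : ℕ) : ℝ := ∑ k ∈ Finset.range (n+1), W c (s e v k)

def Tt : ℕ → ℝ
  | 0 => 1
  | n+1 => 2 * Tt n + (n+1) * (Q c e v (n+1) + 1) + (n+2)^2

def blk (t : ℝ) : ℕ := sSup {k | Tt c e v k ≤ t}

def p (n : ℕ) (t : ℝ) : ℂ := ∑ l ∈ s e v n, c l * Complex.exp (Complex.I * l * t)

def g (t : ℝ) : ℂ := p c e v (blk c e v t) t

-- basic lemmas
lemma gap_pos (u : Finset ℝ) : 0 < gap u := by
  have h := Finset.min'_mem (insert (1:ℝ) (u.offDiag.image (fun q => |q.1 - q.2|)))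
    (Finset.insert_nonempty _ _)
  rw [Finset.mem_insert] at h
  rcases h with h | h
  · rw [gap, h]; norm_num
  · rw [Finset.mem_image] at h
    obtain ⟨q, hq, hq2⟩ := h
    rw [Finset.mem_offDiag] at hq
    rw [gap, ← hq2]
    exact abs_pos.mpr (sub_ne_zero.mpr hq.2.2)

lemma gap_le {u : Finset ℝ} {a b : ℝ} (ha : a ∈ u) (hb : b ∈ u) (hab : a ≠ b) :
    gap u ≤ |a - b| := by
  apply Finset.min'_le
  rw [Finset.mem_insert, Finset.mem_image]
  exact Or.inr ⟨(a, b), Finset.mem_offDiag.mpr ⟨ha, hb, hab⟩, rfl⟩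

lemma D_nonneg (u : Finset ℝ) : 0 ≤ D c u := Finset.sum_nonneg fun _ _ => norm_nonneg _

lemma D_mono {u u' : Finset ℝ} (h : u ⊆ u') : D c u ≤ D c u' :=
  Finset.sum_le_sum_of_subset_of_nonneg h (fun _ _ _ => norm_nonneg _)

lemma W_nonneg (u : Finset ℝ) : 0 ≤ W c u := by
  have h1 := D_nonneg c u
  have h2 := gap_pos u
  rw [W]
  have h3 : (0:ℝ) ≤ 4 / gap u := by positivity
  nlinarith [sq_nonneg (D c u)]

lemma Q_nonneg (n : ℕ) : 0 ≤ Q c e v n :=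
  Finset.sum_nonneg fun k _ => W_nonneg c _

lemma norm_p_le (n : ℕ) (t : ℝ) : ‖p c e v n t‖ ≤ D c (s e v n) := by
  refine (norm_sum_le _ _).trans (Finset.sum_le_sum fun l _ => ?_)
  rw [norm_mul, norm_exp_I_mul, mul_one]

lemma s_mono : Monotone (s e v) := fun a b hab =>
  Finset.biUnion_subset_biUnion_of_subset_left _ (by
    intro x hx; rw [Finset.mem_range] at *; omega)

lemma v_subset_s (n : ℕ) : v n ⊆ s e v n := by
  intro x hx
  rw [s, Finset.mem_biUnion]
  exact ⟨n, by simp, Finset.mem_union_right _ hx⟩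

lemma e_mem_s {j n : ℕ} (h : j + 1 ≤ n) : e j ∈ s e v n := by
  rw [s, Finset.mem_biUnion]
  refine ⟨j+1, by simp; omega, Finset.mem_union_left _ ?_⟩
  rw [Finset.mem_image]; exact ⟨j, by simp, rfl⟩

lemma one_le_Tt (n : ℕ) : 1 ≤ Tt c e v n := by
  induction n with
  | zero => simp [Tt]
  | succ n ih =>
    rw [Tt]
    have := Q_nonneg c e v (n+1)
    have h2 : (0:ℝ) ≤ (n+1 : ℕ) := by positivity
    nlinarith [sq_nonneg ((n:ℝ)+2)]

lemma Tt_pos (n : ℕ) : 0 < Tt c e v n := lt_of_lt_of_le one_pos (one_le_Tt c e v n)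

lemma Tt_lt_succ (n : ℕ) : Tt c e v n < Tt c e v (n+1) := by
  rw [Tt]
  have := Q_nonneg c e v (n+1)
  have := Tt_pos c e v n
  have h2 : (0:ℝ) ≤ (n:ℝ)+1 := by positivity
  nlinarith [sq_nonneg ((n:ℝ)+2)]

lemma Tt_strictMono : StrictMono (Tt c e v) := strictMono_nat_of_lt_succ (Tt_lt_succ c e v)

lemma Tt_ge_nat (n : ℕ) : (n:ℝ) + 1 ≤ Tt c e v n := by
  induction n with
  | zero => simp [Tt]
  | succ n ih =>
    rw [Tt]
    have hQ := Q_nonneg c e v (n+1)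
    have h1 := one_le_Tt c e v n
    push_cast
    nlinarith [sq_nonneg ((n:ℝ)+2)]

lemma Tt_ge_sq {n : ℕ} (hn : 1 ≤ n) : ((n:ℝ)+1)^2 ≤ Tt c e v n := by
  obtain ⟨k, rfl⟩ := Nat.exists_eq_add_of_le hn
  rw [add_comm 1 k, Tt]
  have := Tt_pos c e v k
  have := Q_nonneg c e v (k+1)
  have h2 : (0:ℝ) ≤ (k:ℝ)+1 := by positivity
  push_cast
  nlinarith

lemma Tt_ge_NQ {n : ℕ} (hn : 1 ≤ n) : (n:ℝ) * Q c e v n ≤ Tt c e v n := by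
  obtain ⟨k, rfl⟩ := Nat.exists_eq_add_of_le hn
  rw [add_comm 1 k, Tt]
  have := Tt_pos c e v k
  have := Q_nonneg c e v (k+1)
  push_cast
  nlinarith [sq_nonneg ((k:ℝ)+2)]

lemma Tt_tendsto : Tendsto (Tt c e v) atTop atTop := by
  apply tendsto_atTop_mono (fun n => le_of_lt ?_) tendsto_natCast_atTop_atTop
  calc (n:ℝ) < (n:ℝ) + 1 := by linarith
  _ ≤ Tt c e v n := Tt_ge_nat c e v n

lemma ae_ne (x : ℝ) : ∀ᵐ t : ℝ, t ≠ x := by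
  rw [ae_iff]
  simp only [ne_eq, not_not, Set.setOf_eq_eq_singleton]
  exact measure_singleton x

-- blk lemmas
lemma bddAbove_blkset (t : ℝ) : BddAbove {k | Tt c e v k ≤ t} := by
  obtain ⟨M, hM⟩ := (Tt_tendsto c e v).eventually_gt_atTop t |>.exists
  refine ⟨M, fun k hk => ?_⟩
  by_contra h
  push_neg at h
  have h2 := Tt_strictMono c e v h
  simp only [Set.mem_setOf_eq] at hk
  linarith

lemma blk_eq {t : ℝ} {k : ℕ} (h1 : Tt c e v k ≤ t) (h2 : t < Tt c e v (k+1)) :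
    blk c e v t = k := by
  apply IsGreatest.csSup_eq
  constructor
  · exact h1
  · intro j hj
    simp only [Set.mem_setOf_eq] at hj
    by_contra hc2
    push_neg at hc2
    have : Tt c e v (k+1) ≤ Tt c e v j := (Tt_strictMono c e v).monotone hc2
    linarith

lemma blk_zero {t : ℝ} (h : t < Tt c e v 0) : blk c e v t = 0 := by
  have : {k | Tt c e v k ≤ t} = ∅ := by
    ext k
    simp only [Set.mem_setOf_eq, Set.mem_empty_iff_false, iff_false, not_le]
    exact lt_of_lt_of_le h ((Tt_strictMono c e v).monotone (Nat.zero_le k))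
  rw [blk, this, csSup_empty]
  rfl

lemma blk_ge {t : ℝ} {k : ℕ} (h : Tt c e v k ≤ t) : k ≤ blk c e v t :=
  le_csSup (bddAbove_blkset c e v t) h

lemma Tt_blk_le {t : ℝ} (h : Tt c e v 0 ≤ t) : Tt c e v (blk c e v t) ≤ t :=
  Nat.sSup_mem ⟨0, h⟩ (bddAbove_blkset c e v t)

lemma lt_Tt_blk_succ (t : ℝ) : t < Tt c e v (blk c e v t + 1) := by
  by_contra h
  push_neg at h
  have := blk_ge c e v h
  omega

lemma g_eq_p {t : ℝ} {k : ℕ} (h1 : Tt c e v k ≤ t) (h2 : t < Tt c e v (k+1)) :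
    g c e v t = p c e v k t := by
  rw [g, blk_eq c e v h1 h2]

lemma g_eq_p0 {t : ℝ} (h : t < Tt c e v 1) : g c e v t = p c e v 0 t := by
  rcases lt_or_ge t (Tt c e v 0) with h0 | h0
  · rw [g, blk_zero c e v h0]
  · exact g_eq_p c e v h0 h

-- continuity of p
lemma p_continuous (n : ℕ) : Continuous (p c e v n) := by
  apply continuous_finset_sum
  intro l _
  exact continuous_const.mul (Complex.continuous_exp.comp (by fun_prop))

-- integrability
lemma integrableOn_comp {E : Type*} [NormedAddCommGroup E] (H : ℂ × ℝ → E)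
    (hH : Continuous H) (a b : ℝ) :
    IntegrableOn (fun t => H (g c e v t, t)) (Set.Ioc a b) := by
  -- reduce to b ≤ Tt (N+1)
  obtain ⟨N, hN⟩ := (Tt_tendsto c e v).eventually_ge_atTop b |>.exists
  have main : ∀ N : ℕ, ∀ a b : ℝ, b ≤ Tt c e v (N+1) →
      IntegrableOn (fun t => H (g c e v t, t)) (Set.Ioc a b) := by
    intro N
    induction N with
    | zero =>
      intro a b hb
      have hcont : Continuous (fun t => H (p c e v 0 t, t)) :=
        hH.comp ((p_continuous c e v 0).prodMk continuous_id)
      apply (hcont.integrableOn_Ioc).congr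
      filter_upwards [ae_restrict_mem measurableSet_Ioc,
        ae_restrict_of_ae (ae_ne (Tt c e v 1))] with t ht hne
      rw [g_eq_p0 c e v (lt_of_le_of_ne (ht.2.trans hb) hne)]
    | succ N ih =>
      intro a b hb
      by_cases hbT : b ≤ Tt c e v (N+1)
      · exact ih a b hbT
      push_neg at hbT
      have hsub : Set.Ioc a b ⊆ Set.Ioc a (Tt c e v (N+1)) ∪ Set.Ioc (Tt c e v (N+1)) b := by
        intro t ht
        rcases le_or_gt t (Tt c e v (N+1)) with h | h
        · exact Or.inl ⟨ht.1, h⟩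
        · exact Or.inr ⟨h, ht.2⟩
      refine ((ih a _ le_rfl).union ?_).mono_set hsub
      have hcont : Continuous (fun t => H (p c e v (N+1) t, t)) :=
        hH.comp ((p_continuous c e v (N+1)).prodMk continuous_id)
      apply (hcont.integrableOn_Ioc).congr
      filter_upwards [ae_restrict_mem measurableSet_Ioc,
        ae_restrict_of_ae (ae_ne (Tt c e v (N+2)))] with t ht hne
      rw [g_eq_p c e v ht.1.le (lt_of_le_of_ne (ht.2.trans hb) hne)]
  exact main N a b (hN.trans (Tt_strictMono c e v (Nat.lt_succ_self N)).le)

lemma intervalIntegrable_comp {E : Type*} [NormedAddCommGroup E] (H : ℂ × ℝ → E)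
    (hH : Continuous H) (a b : ℝ) :
    IntervalIntegrable (fun t => H (g c e v t, t)) volume a b := by
  rw [intervalIntegrable_iff]
  exact integrableOn_comp c e v H hH _ _

-- block congruence for interval integrals
lemma block_integral_congr {E : Type*} [NormedAddCommGroup E] [NormedSpace ℝ E]
    (H : ℂ × ℝ → E) {k : ℕ} {V U : ℝ}
    (hV : Tt c e v k ≤ V) (hVU : V ≤ U) (hU : U ≤ Tt c e v (k+1)) :
    (∫ t in V..U, H (g c e v t, t)) = ∫ t in V..U, H (p c e v k t, t) := by
  apply intervalIntegral.integral_congr_ae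
  filter_upwards [ae_ne (Tt c e v (k+1))] with t hne ht
  rw [Set.uIoc_of_le hVU] at ht
  rw [g_eq_p c e v (hV.trans ht.1.le) (lt_of_le_of_ne (ht.2.trans hU) hne)]

lemma block_congr_exp (l : ℝ) {k : ℕ} {V U : ℝ}
    (hV : Tt c e v k ≤ V) (hVU : V ≤ U) (hU : U ≤ Tt c e v (k+1)) :
    (∫ t in V..U, g c e v t * Complex.exp (-Complex.I * l * t))
      = ∫ t in V..U, p c e v k t * Complex.exp (-Complex.I * l * t) :=
  block_integral_congr c e v (fun q => q.1 * Complex.exp (-Complex.I * l * q.2)) hV hVU hU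

lemma block_congr_sq (m : ℕ) {k : ℕ} {V U : ℝ}
    (hV : Tt c e v k ≤ V) (hVU : V ≤ U) (hU : U ≤ Tt c e v (k+1)) :
    (∫ t in V..U, ‖g c e v t - p c e v m t‖^2)
      = ∫ t in V..U, ‖p c e v k t - p c e v m t‖^2 :=
  block_integral_congr c e v (fun q => ‖q.1 - p c e v m q.2‖^2) hV hVU hU

lemma p_mul_exp (k : ℕ) (l t : ℝ) :
    p c e v k t * Complex.exp (-Complex.I * l * t)
      = ∑ x ∈ s e v k, c x * Complex.exp (Complex.I * (x - l : ℝ) * t) := by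
  rw [p, Finset.sum_mul]
  apply Finset.sum_congr rfl
  intro x _
  rw [mul_assoc, ← Complex.exp_add]
  congr 1
  push_cast
  ring

lemma int_p_mul_exp (k : ℕ) (l A U : ℝ) :
    (∫ t in A..U, p c e v k t * Complex.exp (-Complex.I * l * t))
      = ∑ x ∈ s e v k, c x * ∫ t in A..U, Complex.exp (Complex.I * (x - l : ℝ) * t) := by
  simp only [p_mul_exp]
  rw [intervalIntegral.integral_finset_sum]
  · simp only [intervalIntegral.integral_const_mul]
  · intro x _
    apply Continuous.intervalIntegrable
    exact continuous_const.mul (Complex.continuous_exp.comp (by fun_prop))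

lemma int_exp_zero_freq (A U : ℝ) (μ : ℝ) (hμ : μ = 0) :
    (∫ t in A..U, Complex.exp (Complex.I * μ * t)) = ((U - A : ℝ) : ℂ) := by
  subst hμ
  simp [Complex.ofReal_zero, Complex.exp_zero, intervalIntegral.integral_const,
    Complex.real_smul]

lemma block_est (l : ℝ) (k : ℕ) (U : ℝ)
    (hU1 : Tt c e v k ≤ U) (hU2 : U ≤ Tt c e v (k+1))
    (hl : c l = 0 ∨ l ∈ s e v k)
    (ε' : ℝ) (hε' : 0 < ε') (Bf : Finset ℝ)
    (hBf : ∀ y, y ∉ Bf → ‖c y‖ < ε')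
    (δ : ℝ) (hδpos : 0 < δ) (hδ : ∀ y ∈ Bf, y ≠ l → δ ≤ |y - l|)
    (CB : ℝ) (hCB : (∑ y ∈ Bf, ‖c y‖) * (2/δ) ≤ CB) :
    ‖(∫ t in (Tt c e v k)..U, g c e v t * Complex.exp (-Complex.I * l * t))
      - c l * ((U - Tt c e v k : ℝ) : ℂ)‖
      ≤ W c (s e v k) + CB + ε' * (U - Tt c e v k) := by
  have hCB0 : 0 ≤ CB :=
    le_trans (by positivity) hCB
  have hgap := gap_pos (s e v k)
  have hlen : (0:ℝ) ≤ U - Tt c e v k := by linarith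
  set A := Tt c e v k with hA
  set I : ℝ → ℂ := fun x => ∫ t in A..U, Complex.exp (Complex.I * (x - l : ℝ) * t) with hI
  have hIx_len : ∀ x : ℝ, ‖I x‖ ≤ U - A := fun x => int_exp_len hU1
  have hIx_div : ∀ x : ℝ, x ≠ l → ‖I x‖ ≤ 2 / |x - l| := by
    intro x hx
    exact int_exp_div (sub_ne_zero.mpr hx) A U
  have hmain : (∫ t in A..U, g c e v t * Complex.exp (-Complex.I * l * t))
      - c l * ((U - A : ℝ) : ℂ) = ∑ x ∈ (s e v k).erase l, c x * I x := by
    rw [block_congr_exp c e v l le_rfl hU1 hU2, int_p_mul_exp]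
    by_cases hmem : l ∈ s e v k
    · rw [← Finset.sum_erase_add _ _ hmem]
      have h0 : c l * I l = c l * ((U - A : ℝ) : ℂ) := by
        rw [hI]
        simp only []
        rw [int_exp_zero_freq A U (l - l) (sub_self l)]
      rw [h0]; ring
    · have hc0 : c l = 0 := hl.resolve_right hmem
      rw [Finset.erase_eq_of_notMem hmem, hc0]; ring
  rw [hmain]
  set s' := (s e v k).erase l with hs'
  set nr := s'.filter (fun x => |x - l| < gap (s e v k) / 2) with hnr
  calc ‖∑ x ∈ s', c x * I x‖ ≤ ∑ x ∈ s', ‖c x‖ * ‖I x‖ := by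
        refine (norm_sum_le _ _).trans (Finset.sum_le_sum fun x _ => ?_)
        rw [norm_mul]
  _ = (∑ x ∈ nr, ‖c x‖ * ‖I x‖)
      + ∑ x ∈ s'.filter (fun x => ¬ |x - l| < gap (s e v k) / 2), ‖c x‖ * ‖I x‖ :=
        (Finset.sum_filter_add_sum_filter_not s' _ _).symm
  _ ≤ (CB + ε' * (U - A)) + W c (s e v k) := by
      gcongr ?_ + ?_
      · -- near part
        rcases nr.eq_empty_or_nonempty with hemp | ⟨x, hx⟩
        · rw [hemp, Finset.sum_empty]; positivity
        · have hxs : x ∈ s' := Finset.mem_of_mem_filter x hx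
          have hxl : x ≠ l := Finset.ne_of_mem_erase hxs
          have hxsk : x ∈ s e v k := Finset.mem_of_mem_erase hxs
          have hxnear : |x - l| < gap (s e v k) / 2 := by
            have := (Finset.mem_filter.mp hx).2
            simpa using this
          have huniq : ∀ y ∈ nr, y = x := by
            intro y hy
            by_contra hyx
            have hys : y ∈ s' := Finset.mem_of_mem_filter y hy
            have hysk : y ∈ s e v k := Finset.mem_of_mem_erase hys
            have hynear : |y - l| < gap (s e v k) / 2 := by
              have := (Finset.mem_filter.mp hy).2
              simpa using this
            have h1 : gap (s e v k) ≤ |y - x| := gap_le hysk hxsk hyx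
            have h2 : |y - x| ≤ |y - l| + |x - l| := by
              have := abs_sub (y - l) (x - l)
              calc |y - x| = |(y - l) - (x - l)| := by ring_nf
              _ ≤ |y - l| + |x - l| := abs_sub _ _
            linarith
          have hsing : nr = {x} := Finset.eq_singleton_iff_unique_mem.mpr ⟨hx, huniq⟩
          rw [hsing, Finset.sum_singleton]
          by_cases hxB : x ∈ Bf
          · have h2 : δ ≤ |x - l| := hδ x hxB hxl
            have h3 : ‖I x‖ ≤ 2 / δ := by
              refine (hIx_div x hxl).trans ?_
              exact div_le_div_of_nonneg_left (by norm_num) hδpos h2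
            have h4 : ‖c x‖ ≤ ∑ y ∈ Bf, ‖c y‖ :=
              Finset.single_le_sum (fun y _ => norm_nonneg _) hxB
            have : ‖c x‖ * ‖I x‖ ≤ (∑ y ∈ Bf, ‖c y‖) * (2/δ) := by
              apply mul_le_mul h4 h3 (norm_nonneg _)
              positivity
            linarith [mul_nonneg (le_of_lt hε') hlen]
          · have h2 : ‖c x‖ < ε' := hBf x hxB
            have : ‖c x‖ * ‖I x‖ ≤ ε' * (U - A) :=
              mul_le_mul h2.le (hIx_len x) (norm_nonneg _) hε'.le
            linarith
      · -- far part
        have hfar : ∀ x ∈ s'.filter (fun x => ¬ |x - l| < gap (s e v k) / 2),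
            ‖c x‖ * ‖I x‖ ≤ ‖c x‖ * (4 / gap (s e v k)) := by
          intro x hx
          have hxs : x ∈ s' := Finset.mem_of_mem_filter x hx
          have hxl : x ≠ l := Finset.ne_of_mem_erase hxs
          have hxfar : gap (s e v k) / 2 ≤ |x - l| := by
            have := (Finset.mem_filter.mp hx).2
            simpa using not_lt.mp (by simpa using this)
          refine mul_le_mul_of_nonneg_left ?_ (norm_nonneg _)
          refine (hIx_div x hxl).trans ?_
          have := div_le_div_of_nonneg_left (by norm_num : (0:ℝ) ≤ 2) (by linarith) hxfar
          calc (2:ℝ) / |x - l| ≤ 2 / (gap (s e v k) / 2) := this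
          _ = 4 / gap (s e v k) := by field_simp; ring
        calc ∑ x ∈ s'.filter (fun x => ¬ |x - l| < gap (s e v k) / 2), ‖c x‖ * ‖I x‖
            ≤ ∑ x ∈ s'.filter (fun x => ¬ |x - l| < gap (s e v k) / 2),
                ‖c x‖ * (4 / gap (s e v k)) := Finset.sum_le_sum hfar
        _ = (∑ x ∈ s'.filter (fun x => ¬ |x - l| < gap (s e v k) / 2), ‖c x‖)
              * (4 / gap (s e v k)) := by rw [Finset.sum_mul]
        _ ≤ D c (s e v k) * (4 / gap (s e v k)) := by
            apply mul_le_mul_of_nonneg_right _ (by positivity)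
            apply D_mono
            intro y hy
            exact Finset.mem_of_mem_erase (Finset.mem_of_mem_filter y hy)
        _ ≤ W c (s e v k) := by
            rw [W]
            apply mul_le_mul_of_nonneg_right _ (by positivity)
            nlinarith [sq_nonneg (D c (s e v k))]
  _ = W c (s e v k) + CB + ε' * (U - A) := by ring

lemma E_cont (l : ℝ) : Continuous (fun q : ℂ × ℝ => q.1 * Complex.exp (-Complex.I * l * q.2)) := by
  fun_prop

lemma gE_intervalIntegrable (l : ℝ) (a b : ℝ) :
    IntervalIntegrable (fun t => g c e v t * Complex.exp (-Complex.I * l * t)) volume a b :=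
  intervalIntegrable_comp c e v _ (E_cont l) a b

lemma cum_est (l : ℝ)
    (ε' : ℝ) (hε' : 0 < ε') (Bf : Finset ℝ)
    (hBf : ∀ y, y ∉ Bf → ‖c y‖ < ε')
    (δ : ℝ) (hδpos : 0 < δ) (hδ : ∀ y ∈ Bf, y ≠ l → δ ≤ |y - l|)
    (CB : ℝ) (hCB : (∑ y ∈ Bf, ‖c y‖) * (2/δ) ≤ CB)
    (m₀ : ℕ) (hm₀ : ∀ k, m₀ ≤ k → (c l = 0 ∨ l ∈ s e v k)) :
    ∀ N, m₀ ≤ N →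
    ‖(∫ t in (0:ℝ)..Tt c e v N, g c e v t * Complex.exp (-Complex.I * l * t))
      - c l * ((Tt c e v N - Tt c e v m₀ : ℝ) : ℂ)‖
      ≤ ‖∫ t in (0:ℝ)..Tt c e v m₀, g c e v t * Complex.exp (-Complex.I * l * t)‖
        + ∑ k ∈ Finset.Ico m₀ N,
            (W c (s e v k) + CB + ε' * (Tt c e v (k+1) - Tt c e v k)) := by
  intro N hN
  induction N, hN using Nat.le_induction with
  | base => simp
  | succ N hN ih =>
    have hsplit : (∫ t in (0:ℝ)..Tt c e v (N+1),
          g c e v t * Complex.exp (-Complex.I * l * t))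
        = (∫ t in (0:ℝ)..Tt c e v N, g c e v t * Complex.exp (-Complex.I * l * t))
          + ∫ t in (Tt c e v N)..(Tt c e v (N+1)),
              g c e v t * Complex.exp (-Complex.I * l * t) :=
      (intervalIntegral.integral_add_adjacent_intervals
        (gE_intervalIntegrable c e v l _ _) (gE_intervalIntegrable c e v l _ _)).symm
    have hcast : c l * ((Tt c e v (N+1) - Tt c e v m₀ : ℝ) : ℂ)
        = c l * ((Tt c e v N - Tt c e v m₀ : ℝ) : ℂ)
          + c l * ((Tt c e v (N+1) - Tt c e v N : ℝ) : ℂ) := by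
      push_cast
      ring
    rw [hsplit, hcast]
    have hblock := block_est c e v l N (Tt c e v (N+1)) (Tt_lt_succ c e v N).le le_rfl
      (hm₀ N hN) ε' hε' Bf hBf δ hδpos hδ CB hCB
    rw [Finset.sum_Ico_succ_top hN]
    calc ‖_‖ ≤ ‖(∫ t in (0:ℝ)..Tt c e v N, g c e v t * Complex.exp (-Complex.I * l * t))
          - c l * ((Tt c e v N - Tt c e v m₀ : ℝ) : ℂ)‖
          + ‖(∫ t in (Tt c e v N)..(Tt c e v (N+1)),
                g c e v t * Complex.exp (-Complex.I * l * t))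
              - c l * ((Tt c e v (N+1) - Tt c e v N : ℝ) : ℂ)‖ := by
          refine le_trans (le_of_eq ?_) (norm_add_le _ _)
          congr 1
          ring
    _ ≤ _ := by
          refine add_le_add ih hblock |>.trans (le_of_eq ?_)
          ring

set_option maxHeartbeats 1600000 in
lemma coeff (hesupp : ∀ l : ℝ, c l ≠ 0 → ∃ j, e j = l)
    (hfin : ∀ ε : ℝ, 0 < ε → {y : ℝ | ε ≤ ‖c y‖}.Finite)
    (l : ℝ) :
    Tendsto (fun T : ℝ =>
        (∫ t in (0:ℝ)..T, g c e v t * Complex.exp (-Complex.I * l * t)) / T)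
      atTop (nhds (c l)) := by
  rw [Metric.tendsto_nhds]
  intro ε hε
  set ε' := ε/8 with hε'def
  have hε' : 0 < ε' := by positivity
  set Bf := (hfin ε' hε').toFinset with hBfdef
  have hBf : ∀ y, y ∉ Bf → ‖c y‖ < ε' := by
    intro y hy
    rw [hBfdef, Set.Finite.mem_toFinset, Set.mem_setOf_eq, not_le] at hy
    exact hy
  set δ := (insert (1:ℝ) ((Bf.erase l).image (fun y => |y - l|))).min'
      (Finset.insert_nonempty _ _) with hδdef
  have hδpos : 0 < δ := by
    have h := Finset.min'_mem (insert (1:ℝ) ((Bf.erase l).image (fun y => |y - l|)))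
      (Finset.insert_nonempty _ _)
    rw [Finset.mem_insert] at h
    rcases h with h | h
    · rw [hδdef, h]; norm_num
    · rw [Finset.mem_image] at h
      obtain ⟨y, hy, hy2⟩ := h
      rw [hδdef, ← hy2]
      exact abs_pos.mpr (sub_ne_zero.mpr (Finset.ne_of_mem_erase hy))
  have hδ : ∀ y ∈ Bf, y ≠ l → δ ≤ |y - l| := by
    intro y hy hyl
    apply Finset.min'_le
    rw [Finset.mem_insert, Finset.mem_image]
    exact Or.inr ⟨y, Finset.mem_erase.mpr ⟨hyl, hy⟩, rfl⟩
  set CB := (∑ y ∈ Bf, ‖c y‖) * (2/δ) with hCBdef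
  have hCB0 : 0 ≤ CB := by positivity
  have hm₀ex : ∃ m₀ : ℕ, ∀ k, m₀ ≤ k → (c l = 0 ∨ l ∈ s e v k) := by
    by_cases hcl : c l = 0
    · exact ⟨0, fun k _ => Or.inl hcl⟩
    · obtain ⟨j, hj⟩ := hesupp l hcl
      exact ⟨j+1, fun k hk => Or.inr (hj ▸ e_mem_s e v hk)⟩
  obtain ⟨m₀, hm₀⟩ := hm₀ex
  set K₀ := ‖∫ t in (0:ℝ)..Tt c e v m₀, g c e v t * Complex.exp (-Complex.I * l * t)‖ with hK₀
  set K₁ := K₀ + ‖c l‖ * Tt c e v m₀ with hK₁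
  have hK₁0 : 0 ≤ K₁ := by
    rw [hK₁]
    have := (Tt_pos c e v m₀).le
    positivity
  obtain ⟨Na, hNa⟩ := exists_nat_gt (8/ε)
  obtain ⟨Nb, hNb⟩ := exists_nat_gt (4*CB/ε)
  set N₁ := max (max Na Nb) (m₀+1) with hN₁def
  filter_upwards [eventually_ge_atTop (max (Tt c e v N₁) (4*K₁/ε + 1))] with T hT
  have hTN₁ : Tt c e v N₁ ≤ T := le_trans (le_max_left _ _) hT
  have hTK : 4*K₁/ε + 1 ≤ T := le_trans (le_max_right _ _) hT
  have hT1 : Tt c e v 0 ≤ T :=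
    le_trans ((Tt_strictMono c e v).monotone (Nat.zero_le N₁)) hTN₁
  have hTpos : (0:ℝ) < T := lt_of_lt_of_le (Tt_pos c e v 0) hT1
  set N := blk c e v T with hNdef
  have hNN₁ : N₁ ≤ N := blk_ge c e v hTN₁
  have hTN : Tt c e v N ≤ T := Tt_blk_le c e v hT1
  have hTN2 : T < Tt c e v (N+1) := lt_Tt_blk_succ c e v T
  have hm₀N : m₀ ≤ N := by
    have : m₀ + 1 ≤ N₁ := le_max_right _ _
    omega
  have h1N : 1 ≤ N := by
    have : m₀ + 1 ≤ N₁ := le_max_right _ _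
    omega
  have hNa' : (8:ℝ)/ε < N := by
    have h1 : (Na:ℝ) ≤ N := by
      have : Na ≤ N := le_trans (le_trans (le_max_left _ _) (le_max_left _ _)) hNN₁
      exact_mod_cast this
    linarith
  have hNb' : (4:ℝ)*CB/ε < N := by
    have h1 : (Nb:ℝ) ≤ N := by
      have : Nb ≤ N := le_trans (le_trans (le_max_right _ _) (le_max_left _ _)) hNN₁
      exact_mod_cast this
    linarith
  -- decompose the integral
  have hsplit : (∫ t in (0:ℝ)..T, g c e v t * Complex.exp (-Complex.I * l * t))
      = (∫ t in (0:ℝ)..Tt c e v N, g c e v t * Complex.exp (-Complex.I * l * t))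
        + ∫ t in (Tt c e v N)..T, g c e v t * Complex.exp (-Complex.I * l * t) :=
    (intervalIntegral.integral_add_adjacent_intervals
      (gE_intervalIntegrable c e v l _ _) (gE_intervalIntegrable c e v l _ _)).symm
  have hcum := cum_est c e v l ε' hε' Bf hBf δ hδpos hδ CB le_rfl m₀ hm₀ N hm₀N
  have hblock := block_est c e v l N T hTN hTN2.le (hm₀ N hm₀N) ε' hε' Bf hBf δ hδpos hδ
    CB le_rfl
  -- sum bound
  have hsum : ∑ k ∈ Finset.Ico m₀ N,
      (W c (s e v k) + CB + ε' * (Tt c e v (k+1) - Tt c e v k))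
      ≤ Q c e v N + (N:ℝ) * CB + ε' * (Tt c e v N - Tt c e v m₀) := by
    rw [Finset.sum_add_distrib, Finset.sum_add_distrib]
    refine add_le_add (add_le_add ?_ ?_) ?_
    · rw [Q]
      apply Finset.sum_le_sum_of_subset_of_nonneg
      · intro k hk
        rw [Finset.mem_Ico] at hk
        rw [Finset.mem_range]
        omega
      · intro k _ _
        exact W_nonneg c _
    · rw [Finset.sum_const, Nat.card_Ico, nsmul_eq_mul]
      have : ((N - m₀ : ℕ) : ℝ) ≤ (N:ℝ) := by
        have : (N - m₀ : ℕ) ≤ N := Nat.sub_le _ _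
        exact_mod_cast this
      nlinarith
    · rw [← Finset.mul_sum]
      apply mul_le_mul_of_nonneg_left _ hε'.le
      rw [Finset.sum_Ico_eq_sub _ hm₀N]
      rw [Finset.sum_range_sub (fun k => Tt c e v k), Finset.sum_range_sub (fun k => Tt c e v k)]
      linarith
  have hWN : W c (s e v N) ≤ Q c e v N := by
    rw [Q]
    apply Finset.single_le_sum (fun k _ => W_nonneg c _)
    rw [Finset.mem_range]
    omega
  -- assemble
  have hkey : ‖(∫ t in (0:ℝ)..T, g c e v t * Complex.exp (-Complex.I * l * t)) - c l * T‖
      ≤ K₁ + 2 * Q c e v N + ((N:ℝ)+1) * CB + ε' * T := by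
    have htri : ‖(∫ t in (0:ℝ)..T, g c e v t * Complex.exp (-Complex.I * l * t)) - c l * T‖
        ≤ ‖(∫ t in (0:ℝ)..Tt c e v N, g c e v t * Complex.exp (-Complex.I * l * t))
            - c l * ((Tt c e v N - Tt c e v m₀ : ℝ) : ℂ)‖
          + ‖(∫ t in (Tt c e v N)..T, g c e v t * Complex.exp (-Complex.I * l * t))
              - c l * ((T - Tt c e v N : ℝ) : ℂ)‖
          + ‖c l‖ * Tt c e v m₀ := by
      rw [hsplit]
      have heq : (∫ t in (0:ℝ)..Tt c e v N, g c e v t * Complex.exp (-Complex.I * l * t))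
            + (∫ t in (Tt c e v N)..T, g c e v t * Complex.exp (-Complex.I * l * t))
            - c l * T
          = ((∫ t in (0:ℝ)..Tt c e v N, g c e v t * Complex.exp (-Complex.I * l * t))
              - c l * ((Tt c e v N - Tt c e v m₀ : ℝ) : ℂ))
            + ((∫ t in (Tt c e v N)..T, g c e v t * Complex.exp (-Complex.I * l * t))
                - c l * ((T - Tt c e v N : ℝ) : ℂ))
            + (- (c l * ((Tt c e v m₀ : ℝ) : ℂ))) := by
        push_cast
        ring
      rw [heq]
      refine (norm_add_le _ _).trans ?_
      refine add_le_add (norm_add_le _ _) (le_of_eq ?_)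
      rw [norm_neg, norm_mul]
      congr 1
      rw [Complex.norm_real, Real.norm_eq_abs, abs_of_pos (Tt_pos c e v m₀)]
    calc ‖(∫ t in (0:ℝ)..T, g c e v t * Complex.exp (-Complex.I * l * t)) - c l * T‖
        ≤ (K₀ + (Q c e v N + (N:ℝ) * CB + ε' * (Tt c e v N - Tt c e v m₀)))
          + (W c (s e v N) + CB + ε' * (T - Tt c e v N)) + ‖c l‖ * Tt c e v m₀ := by
          refine htri.trans (add_le_add (add_le_add (hcum.trans ?_) hblock) le_rfl)
          exact add_le_add le_rfl hsum
    _ ≤ K₁ + 2 * Q c e v N + ((N:ℝ)+1) * CB + ε' * T := by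
          rw [hK₁]
          have h1 := Tt_pos c e v m₀
          nlinarith [hε'.le, hWN]
  -- final numeric bound
  rw [dist_eq_norm]
  have hTc : ((T:ℂ)) ≠ 0 := by
    simp only [ne_eq, Complex.ofReal_eq_zero]
    linarith
  have hdiv : (∫ t in (0:ℝ)..T, g c e v t * Complex.exp (-Complex.I * l * t)) / (T:ℂ) - c l
      = ((∫ t in (0:ℝ)..T, g c e v t * Complex.exp (-Complex.I * l * t)) - c l * T) / T := by
    field_simp
  rw [hdiv, norm_div, Complex.norm_real, Real.norm_eq_abs, abs_of_pos hTpos]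
  set R := ‖(∫ t in (0:ℝ)..T, g c e v t * Complex.exp (-Complex.I * l * t)) - c l * (T:ℂ)‖
    with hRdef
  have hQN := Q_nonneg c e v N
  have hNQ : (N:ℝ) * Q c e v N ≤ Tt c e v N := Tt_ge_NQ c e v h1N
  have hsq : ((N:ℝ)+1)^2 ≤ Tt c e v N := Tt_ge_sq c e v h1N
  have hNpos : (0:ℝ) < N := by exact_mod_cast h1N
  have hA : K₁ / T < ε/4 := by
    rw [div_lt_iff₀ hTpos]
    have : 4*K₁/ε < T := by linarith
    rw [div_lt_iff₀ hε] at this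
    nlinarith
  have hB : 2 * Q c e v N / T ≤ ε/4 := by
    rw [div_le_iff₀ hTpos]
    have h3 : 8 < ε * N := by
      rw [div_lt_iff₀ hε] at hNa'
      nlinarith
    nlinarith [mul_le_mul_of_nonneg_left hNQ hε.le, mul_le_mul_of_nonneg_left hTN hε.le,
      mul_nonneg (sub_nonneg.mpr h3.le) hQN]
  have hC : ((N:ℝ)+1) * CB / T ≤ ε/4 := by
    rw [div_le_iff₀ hTpos]
    have h3 : 4*CB < ε * N := by
      rw [div_lt_iff₀ hε] at hNb'
      nlinarith
    nlinarith [mul_le_mul_of_nonneg_left hsq hε.le, mul_le_mul_of_nonneg_left hTN hε.le]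
  have h5 : R / T ≤ (K₁ + 2 * Q c e v N + ((N:ℝ)+1) * CB + ε' * T) / T := by
    gcongr
  have h6 : (K₁ + 2 * Q c e v N + ((N:ℝ)+1) * CB + ε' * T) / T
      = K₁/T + 2 * Q c e v N / T + ((N:ℝ)+1) * CB / T + ε' := by
    field_simp
  have hfin8 : ε' = ε / 8 := hε'def
  linarith

lemma blk_le {t : ℝ} {m : ℕ} (h : t ≤ Tt c e v m) : blk c e v t ≤ m := by
  rcases Set.eq_empty_or_nonempty {k | Tt c e v k ≤ t} with hemp | hne
  · rw [blk, hemp, csSup_empty]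
    exact Nat.zero_le m
  · apply csSup_le hne
    intro j hj
    simp only [Set.mem_setOf_eq] at hj
    by_contra hjm
    push_neg at hjm
    have := (Tt_strictMono c e v) hjm
    linarith

lemma norm_g_le {t : ℝ} {m : ℕ} (h : t ≤ Tt c e v m) : ‖g c e v t‖ ≤ D c (s e v m) := by
  refine (norm_p_le c e v _ t).trans (D_mono c (s_mono e v (blk_le c e v h)))

lemma sq_cont (m : ℕ) :
    Continuous (fun q : ℂ × ℝ => ‖q.1 - p c e v m q.2‖^2) := by
  apply Continuous.pow
  exact (continuous_fst.sub ((p_continuous c e v m).comp continuous_snd)).norm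

lemma sq_intervalIntegrable (m : ℕ) (a b : ℝ) :
    IntervalIntegrable (fun t => ‖g c e v t - p c e v m t‖^2) volume a b :=
  intervalIntegrable_comp c e v _ (sq_cont c e v m) a b

lemma block_sq_est (m : ℕ) {k : ℕ} (hmk : m ≤ k) {U : ℝ}
    (hU1 : Tt c e v k ≤ U) (hU2 : U ≤ Tt c e v (k+1))
    (tl : ℝ) (htl : ∑ x ∈ s e v k \ s e v m, ‖c x‖^2 ≤ tl) :
    (∫ t in (Tt c e v k)..U, ‖g c e v t - p c e v m t‖^2)
      ≤ tl * (U - Tt c e v k) + W c (s e v k) := by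
  have hgap := gap_pos (s e v k)
  have hlen : (0:ℝ) ≤ U - Tt c e v k := by linarith
  set A := Tt c e v k with hA
  rw [block_congr_sq c e v m le_rfl hU1 hU2]
  set d := s e v k \ s e v m with hd
  have hdsub : d ⊆ s e v k := Finset.sdiff_subset
  have hps : ∀ t : ℝ, p c e v k t - p c e v m t
      = ∑ x ∈ d, c x * Complex.exp (Complex.I * x * t) := by
    intro t
    rw [hd, Finset.sum_sdiff_eq_sub (s_mono e v hmk), p, p]
  have hofr : ∀ z : ℂ, ((‖z‖^2 : ℝ) : ℂ) = z * (starRingEnd ℂ) z := by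
    intro z
    rw [Complex.mul_conj, Complex.normSq_eq_norm_sq]
  have h1 : ∀ t : ℝ, ((‖p c e v k t - p c e v m t‖^2 : ℝ) : ℂ)
      = ∑ x ∈ d, ∑ y ∈ d, (c x * (starRingEnd ℂ) (c y))
          * Complex.exp (Complex.I * (x - y : ℝ) * t) := by
    intro t
    rw [hofr, hps, map_sum, Finset.sum_mul_sum]
    apply Finset.sum_congr rfl
    intro x _
    apply Finset.sum_congr rfl
    intro y _
    rw [map_mul, ← Complex.exp_conj]
    have hconj : (starRingEnd ℂ) (Complex.I * y * t) = -Complex.I * y * t := by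
      simp [Complex.conj_I, Complex.conj_ofReal]
    rw [hconj, mul_mul_mul_comm, ← Complex.exp_add]
    congr 1
    push_cast
    ring
  have h2 : ((∫ t in A..U, ‖p c e v k t - p c e v m t‖^2 : ℝ) : ℂ)
      = ∑ x ∈ d, ∑ y ∈ d, (c x * (starRingEnd ℂ) (c y))
          * ∫ t in A..U, Complex.exp (Complex.I * (x - y : ℝ) * t) := by
    rw [← intervalIntegral.integral_ofReal]
    simp only [h1]
    rw [intervalIntegral.integral_finset_sum]
    · apply Finset.sum_congr rfl
      intro x _
      rw [intervalIntegral.integral_finset_sum]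
      · apply Finset.sum_congr rfl
        intro y _
        exact intervalIntegral.integral_const_mul _ _
      · intro y _
        apply Continuous.intervalIntegrable
        exact continuous_const.mul (Complex.continuous_exp.comp (by fun_prop))
    · intro x _
      apply Continuous.intervalIntegrable
      apply continuous_finset_sum
      intro y _
      exact continuous_const.mul (Complex.continuous_exp.comp (by fun_prop))
  -- split diagonal and off-diagonal
  have h3 : ∑ x ∈ d, ∑ y ∈ d, (c x * (starRingEnd ℂ) (c y))
          * ∫ t in A..U, Complex.exp (Complex.I * (x - y : ℝ) * t)
      = ((∑ x ∈ d, ‖c x‖^2) * (U - A) : ℝ)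
        + ∑ x ∈ d, ∑ y ∈ d.erase x, (c x * (starRingEnd ℂ) (c y))
            * ∫ t in A..U, Complex.exp (Complex.I * (x - y : ℝ) * t) := by
    have h4 : ∀ x ∈ d, (∑ y ∈ d, (c x * (starRingEnd ℂ) (c y))
          * ∫ t in A..U, Complex.exp (Complex.I * (x - y : ℝ) * t))
        = ((‖c x‖^2 * (U - A) : ℝ) : ℂ)
          + ∑ y ∈ d.erase x, (c x * (starRingEnd ℂ) (c y))
            * ∫ t in A..U, Complex.exp (Complex.I * (x - y : ℝ) * t) := by
      intro x hx
      rw [← Finset.add_sum_erase d _ hx]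
      congr 1
      rw [int_exp_zero_freq A U (x - x) (sub_self x), Complex.ofReal_mul, hofr (c x)]
    rw [Finset.sum_congr rfl h4, Finset.sum_add_distrib]
    congr 1
    push_cast [Finset.sum_mul]
    rfl
  set off := ∑ x ∈ d, ∑ y ∈ d.erase x, (c x * (starRingEnd ℂ) (c y))
      * ∫ t in A..U, Complex.exp (Complex.I * (x - y : ℝ) * t) with hoffdef
  -- bound the off-diagonal part
  have hoff : ‖off‖ ≤ W c (s e v k) := by
    have hbd : ∀ x ∈ d, ‖∑ y ∈ d.erase x, (c x * (starRingEnd ℂ) (c y))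
        * ∫ t in A..U, Complex.exp (Complex.I * (x - y : ℝ) * t)‖
        ≤ ‖c x‖ * (D c (s e v k) * (2 / gap (s e v k))) := by
      intro x hx
      refine (norm_sum_le _ _).trans ?_
      have hterm : ∀ y ∈ d.erase x, ‖(c x * (starRingEnd ℂ) (c y))
          * ∫ t in A..U, Complex.exp (Complex.I * (x - y : ℝ) * t)‖
          ≤ ‖c x‖ * (‖c y‖ * (2 / gap (s e v k))) := by
        intro y hy
        have hyx : y ≠ x := Finset.ne_of_mem_erase hy
        have hyd : y ∈ d := Finset.mem_of_mem_erase hy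
        have hxy : x - y ≠ 0 := sub_ne_zero.mpr (Ne.symm hyx)
        have hgl : gap (s e v k) ≤ |x - y| := gap_le (hdsub hx) (hdsub hyd) (Ne.symm hyx)
        have hint : ‖∫ t in A..U, Complex.exp (Complex.I * (x - y : ℝ) * t)‖
            ≤ 2 / gap (s e v k) := by
          refine (int_exp_div hxy A U).trans ?_
          exact div_le_div_of_nonneg_left (by norm_num) hgap hgl
        rw [norm_mul, norm_mul, RCLike.norm_conj, mul_assoc]
        apply mul_le_mul_of_nonneg_left _ (norm_nonneg _)
        exact mul_le_mul_of_nonneg_left hint (norm_nonneg _)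
      refine (Finset.sum_le_sum hterm).trans ?_
      rw [← Finset.mul_sum]
      apply mul_le_mul_of_nonneg_left _ (norm_nonneg _)
      rw [← Finset.sum_mul]
      apply mul_le_mul_of_nonneg_right _ (by positivity)
      exact D_mono c (fun y hy => hdsub (Finset.mem_of_mem_erase hy))
    rw [hoffdef]
    refine (norm_sum_le _ _).trans ?_
    refine (Finset.sum_le_sum hbd).trans ?_
    rw [← Finset.sum_mul]
    have hD : ∑ x ∈ d, ‖c x‖ ≤ D c (s e v k) := D_mono c hdsub
    have hDn := D_nonneg c (s e v k)
    have hinv : (0:ℝ) < (gap (s e v k))⁻¹ := by positivity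
    rw [W]
    calc (∑ x ∈ d, ‖c x‖) * (D c (s e v k) * (2 / gap (s e v k)))
        ≤ D c (s e v k) * (D c (s e v k) * (2 / gap (s e v k))) :=
          mul_le_mul_of_nonneg_right hD (by positivity)
    _ ≤ (D c (s e v k) + D c (s e v k) ^ 2 + 1) * (4 / gap (s e v k)) := by
          rw [div_eq_mul_inv, div_eq_mul_inv]
          nlinarith [mul_nonneg hDn hinv.le, mul_nonneg (mul_nonneg hDn hDn) hinv.le, hinv.le]
  -- assemble
  have h5 : (∫ t in A..U, ‖p c e v k t - p c e v m t‖^2)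
      = (∑ x ∈ d, ‖c x‖^2) * (U - A) + off.re := by
    have h7 := congrArg Complex.re (h2.trans h3)
    simp only [Complex.add_re, Complex.ofReal_re] at h7
    exact h7
  have h6 : off.re ≤ ‖off‖ := by
    exact Complex.re_le_norm _
  have h8 : (∑ x ∈ d, ‖c x‖^2) * (U - A) ≤ tl * (U - A) :=
    mul_le_mul_of_nonneg_right htl hlen
  rw [h5]
  linarith

lemma cum2 (m : ℕ) (tl : ℝ)
    (htl : ∀ k, ∑ x ∈ s e v k \ s e v m, ‖c x‖^2 ≤ tl) :
    ∀ N, m ≤ N →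
    (∫ t in (0:ℝ)..Tt c e v N, ‖g c e v t - p c e v m t‖^2)
      ≤ (2 * D c (s e v m))^2 * Tt c e v m + tl * (Tt c e v N - Tt c e v m)
        + ∑ k ∈ Finset.Ico m N, W c (s e v k) := by
  have htl0 : (0:ℝ) ≤ tl := le_trans (by simp) (htl m)
  intro N hN
  induction N, hN using Nat.le_induction with
  | base =>
    simp only [sub_self, mul_zero, Finset.Ico_self, Finset.sum_empty, add_zero]
    have hb : ∀ x ∈ Set.uIoc (0:ℝ) (Tt c e v m),
        ‖(‖g c e v x - p c e v m x‖:ℝ)^2‖ ≤ (2 * D c (s e v m))^2 := by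
      intro x hx
      rw [Set.uIoc_of_le (Tt_pos c e v m).le] at hx
      have hgx : ‖g c e v x‖ ≤ D c (s e v m) := norm_g_le c e v hx.2
      have hpx : ‖p c e v m x‖ ≤ D c (s e v m) := norm_p_le c e v m x
      have h1 : ‖g c e v x - p c e v m x‖ ≤ 2 * D c (s e v m) := by
        refine (norm_sub_le _ _).trans ?_
        linarith
      rw [Real.norm_eq_abs, abs_of_nonneg (by positivity)]
      exact pow_le_pow_left₀ (norm_nonneg _) h1 2
    have h2 := intervalIntegral.norm_integral_le_of_norm_le_const hb
    rw [sub_zero, abs_of_pos (Tt_pos c e v m)] at h2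
    calc (∫ t in (0:ℝ)..Tt c e v m, ‖g c e v t - p c e v m t‖^2)
        ≤ ‖∫ t in (0:ℝ)..Tt c e v m, ‖g c e v t - p c e v m t‖^2‖ := le_abs_self _
    _ ≤ (2 * D c (s e v m))^2 * Tt c e v m := h2
  | succ N hNge ih =>
    have hsplit : (∫ t in (0:ℝ)..Tt c e v (N+1), ‖g c e v t - p c e v m t‖^2)
        = (∫ t in (0:ℝ)..Tt c e v N, ‖g c e v t - p c e v m t‖^2)
          + ∫ t in (Tt c e v N)..(Tt c e v (N+1)), ‖g c e v t - p c e v m t‖^2 :=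
      (intervalIntegral.integral_add_adjacent_intervals
        (sq_intervalIntegrable c e v m _ _) (sq_intervalIntegrable c e v m _ _)).symm
    have hblock := block_sq_est c e v m hNge (Tt_lt_succ c e v N).le le_rfl tl (htl N)
    rw [hsplit, Finset.sum_Ico_succ_top hNge]
    linarith
set_option maxHeartbeats 1600000 in
lemma inB2_g (hv : ∀ n (u : Finset ℝ), Disjoint u (v n) → ∑ x ∈ u, ‖c x‖^2 < 1/((n:ℝ)+1)) :
    InB2 (g c e v) := by
  intro ε hε
  obtain ⟨m, hm⟩ := exists_nat_one_div_lt (show (0:ℝ) < ε/2 by linarith)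
  refine ⟨p c e v m, ⟨s e v m, c, fun t => rfl⟩, ?_⟩
  set tl := 1/((m:ℝ)+1) with htldef
  have htl : ∀ k, ∑ x ∈ s e v k \ s e v m, ‖c x‖^2 ≤ tl := by
    intro k
    apply le_of_lt
    apply hv m
    rw [Finset.disjoint_left]
    intro x hx hxv
    exact (Finset.mem_sdiff.mp hx).2 (v_subset_s e v m hxv)
  have htl0 : (0:ℝ) ≤ tl := by positivity
  set C₄ := (2 * D c (s e v m))^2 * Tt c e v m with hC₄def
  have hC₄0 : 0 ≤ C₄ := by
    have := (Tt_pos c e v m).le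
    positivity
  obtain ⟨Nc, hNc⟩ := exists_nat_gt (16/ε)
  set N₂ := max Nc (max m 1) with hN₂def
  have hev : ∀ᶠ T in atTop,
      (∫ t in Set.Ioc (0:ℝ) T, ‖g c e v t - p c e v m t‖^2)/T ≤ tl + ε/4 := by
    filter_upwards [eventually_ge_atTop (max (Tt c e v N₂) (8*C₄/ε + 1))] with T hT
    have hTN₂ : Tt c e v N₂ ≤ T := le_trans (le_max_left _ _) hT
    have hTC : 8*C₄/ε + 1 ≤ T := le_trans (le_max_right _ _) hT
    have hT1 : Tt c e v 0 ≤ T :=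
      le_trans ((Tt_strictMono c e v).monotone (Nat.zero_le N₂)) hTN₂
    have hTpos : (0:ℝ) < T := lt_of_lt_of_le (Tt_pos c e v 0) hT1
    set N := blk c e v T with hNdef
    have hNN₂ : N₂ ≤ N := blk_ge c e v hTN₂
    have hTN : Tt c e v N ≤ T := Tt_blk_le c e v hT1
    have hTN2 : T < Tt c e v (N+1) := lt_Tt_blk_succ c e v T
    have hmN : m ≤ N := le_trans (le_trans (le_max_left _ _) (le_max_right _ _)) hNN₂
    have h1N : 1 ≤ N := le_trans (le_trans (le_max_right _ _) (le_max_right _ _)) hNN₂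
    have hNc' : (16:ℝ)/ε < N := by
      have h1 : (Nc:ℝ) ≤ N := by
        have : Nc ≤ N := le_trans (le_max_left _ _) hNN₂
        exact_mod_cast this
      linarith
    have hIoc : (∫ t in Set.Ioc (0:ℝ) T, ‖g c e v t - p c e v m t‖^2)
        = ∫ t in (0:ℝ)..T, ‖g c e v t - p c e v m t‖^2 :=
      (intervalIntegral.integral_of_le hTpos.le).symm
    have hsplit : (∫ t in (0:ℝ)..T, ‖g c e v t - p c e v m t‖^2)
        = (∫ t in (0:ℝ)..Tt c e v N, ‖g c e v t - p c e v m t‖^2)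
          + ∫ t in (Tt c e v N)..T, ‖g c e v t - p c e v m t‖^2 :=
      (intervalIntegral.integral_add_adjacent_intervals
        (sq_intervalIntegrable c e v m _ _) (sq_intervalIntegrable c e v m _ _)).symm
    have hcum := cum2 c e v m tl htl N hmN
    have hblock := block_sq_est c e v m hmN hTN hTN2.le tl (htl N)
    have hsumW : ∑ k ∈ Finset.Ico m N, W c (s e v k) ≤ Q c e v N := by
      rw [Q]
      apply Finset.sum_le_sum_of_subset_of_nonneg
      · intro k hk
        rw [Finset.mem_Ico] at hk
        rw [Finset.mem_range]
        omega
      · intro k _ _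
        exact W_nonneg c _
    have hWN : W c (s e v N) ≤ Q c e v N := by
      rw [Q]
      apply Finset.single_le_sum (fun k _ => W_nonneg c _)
      rw [Finset.mem_range]
      omega
    have htot : (∫ t in (0:ℝ)..T, ‖g c e v t - p c e v m t‖^2)
        ≤ C₄ + tl * T + 2 * Q c e v N := by
      rw [hsplit]
      have hTm0 : (0:ℝ) ≤ Tt c e v m := (Tt_pos c e v m).le
      nlinarith
    have hQN := Q_nonneg c e v N
    have hNQ : (N:ℝ) * Q c e v N ≤ Tt c e v N := Tt_ge_NQ c e v h1N
    have hNpos : (0:ℝ) < N := by exact_mod_cast h1N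
    have hB : 2 * Q c e v N / T ≤ ε/8 := by
      rw [div_le_iff₀ hTpos]
      have h3 : 16 < ε * N := by
        rw [div_lt_iff₀ hε] at hNc'
        nlinarith
      nlinarith [mul_le_mul_of_nonneg_left hNQ hε.le, mul_le_mul_of_nonneg_left hTN hε.le,
        mul_nonneg (sub_nonneg.mpr h3.le) hQN]
    have hA : C₄ / T ≤ ε/8 := by
      rw [div_le_iff₀ hTpos]
      have h4 : 8*C₄/ε < T := by linarith
      rw [div_lt_iff₀ hε] at h4
      nlinarith
    rw [hIoc]
    have h5 : (∫ t in (0:ℝ)..T, ‖g c e v t - p c e v m t‖^2)/T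
        ≤ (C₄ + tl * T + 2 * Q c e v N)/T := by gcongr
    have h6 : (C₄ + tl * T + 2 * Q c e v N)/T = C₄/T + tl + 2 * Q c e v N / T := by
      field_simp
    linarith
  have hnn : ∀ᶠ T in atTop,
      (0:ℝ) ≤ (∫ t in Set.Ioc (0:ℝ) T, ‖g c e v t - p c e v m t‖^2)/T := by
    filter_upwards [eventually_gt_atTop (0:ℝ)] with T hT
    apply div_nonneg _ hT.le
    exact integral_nonneg (fun x => by positivity)
  have hrfl : BnormSq (fun t => g c e v t - p c e v m t)
      = limsup (fun T : ℝ =>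
          (∫ t in Set.Ioc (0:ℝ) T, ‖g c e v t - p c e v m t‖^2) / T) atTop := rfl
  rw [hrfl]
  have hlim : limsup (fun T : ℝ =>
      (∫ t in Set.Ioc (0:ℝ) T, ‖g c e v t - p c e v m t‖^2) / T) atTop ≤ tl + ε/4 :=
    limsup_le_of_le (isCoboundedUnder_le_of_eventually_le atTop hnn) hev
  have htlε : tl < ε/2 := hm
  linarith

end

lemma main (c : ℝ → ℂ) (hc : Summable (fun l : ℝ => ‖c l‖^2)) :
    ∃ g : ℝ → ℂ,
      (∀ (l : ℝ) (T : ℝ), IntegrableOn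
        (fun t => g t * Complex.exp (-Complex.I * l * t)) (Set.Ioc (0:ℝ) T) volume)
      ∧ InB2 g ∧ ∀ l : ℝ, HasFourierCoeff g l (c l) := by
  have hfin : ∀ ε : ℝ, 0 < ε → {y : ℝ | ε ≤ ‖c y‖}.Finite := by
    intro ε hε
    have h := hc.tendsto_cofinite_zero
    have h2 : ∀ᶠ y in cofinite, ‖c y‖^2 < ε^2 :=
      h.eventually_lt_const (by positivity)
    rw [eventually_cofinite] at h2
    apply h2.subset
    intro y hy
    simp only [Set.mem_setOf_eq, not_lt]
    exact pow_le_pow_left₀ hε.le hy 2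
  have hsupp_count : {y : ℝ | c y ≠ 0}.Countable := by
    have hsub : {y : ℝ | c y ≠ 0} ⊆ ⋃ n : ℕ, {y : ℝ | 1/((n:ℝ)+1) ≤ ‖c y‖} := by
      intro y hy
      have hpos : 0 < ‖c y‖ := norm_pos_iff.mpr hy
      obtain ⟨n, hn⟩ := exists_nat_one_div_lt hpos
      exact Set.mem_iUnion.mpr ⟨n, hn.le⟩
    exact Set.Countable.mono hsub
      (Set.countable_iUnion (fun n => (hfin _ (by positivity)).countable))
  obtain ⟨e, he⟩ := (hsupp_count.insert 0).exists_eq_range (Set.insert_nonempty _ _)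
  have hesupp : ∀ l : ℝ, c l ≠ 0 → ∃ j, e j = l := by
    intro l hl
    have : l ∈ insert (0:ℝ) {y : ℝ | c y ≠ 0} := Set.mem_insert_of_mem _ hl
    rw [he] at this
    obtain ⟨j, hj⟩ := this
    exact ⟨j, hj⟩
  have hvex : ∀ n : ℕ, ∃ u : Finset ℝ,
      ∀ w : Finset ℝ, Disjoint w u → ∑ x ∈ w, ‖c x‖^2 < 1/((n:ℝ)+1) := by
    intro n
    have hn : Set.Iio (1/((n:ℝ)+1)) ∈ nhds (0:ℝ) := Iio_mem_nhds (by positivity)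
    obtain ⟨u, hu⟩ := hc.vanishing hn
    exact ⟨u, fun w hw => hu w hw⟩
  choose v hv using hvex
  refine ⟨S11.g c e v, fun l T => S11.integrableOn_comp c e v _ (S11.E_cont l) 0 T,
    S11.inB2_g c e v hv, ?_⟩
  intro l
  have h := S11.coeff c e v hesupp hfin l
  rw [HasFourierCoeff]
  refine Tendsto.congr' ?_ h
  filter_upwards [eventually_ge_atTop (0:ℝ)] with T hT
  rw [intervalIntegral.integral_of_le hT]

lemma inB2_zero : InB2 (fun _ : ℝ => (0:ℂ)) := by
  intro ε hε
  refine ⟨fun _ => 0, ⟨∅, 0, by simp⟩, ?_⟩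
  have h0 : BnormSq (fun t : ℝ => (fun _ : ℝ => (0:ℂ)) t - (fun _ : ℝ => (0:ℂ)) t)
      = limsup (fun T : ℝ => (0:ℝ)/T) atTop := by
    rw [BnormSq]
    congr 1
    funext T
    congr 1
    simp
  rw [h0]
  have : (fun T : ℝ => (0:ℝ)/T) = fun _ => (0:ℝ) := by funext T; simp
  rw [this, limsup_const]
  linarith

end S11

/-- `A²` is a Hilbert space isometrically isomorphic (via Fourier coefficients) to `ℓ²(ℝ)`,
and decomposes as `E^⊥ ⊕ B²`:
(i) every `f ∈ A²` (all Fourier coefficients exist and are square-summable) splits as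
`φ + g` with `g ∈ B²` and all Fourier coefficients of `φ` zero;
(ii) every square-summable coefficient family is realized by some element, with the `B²`
part realizing the coefficients (surjectivity of the coefficient map onto `ℓ²(ℝ)`,
whence completeness of `A²`). -/
theorem stmt11 :
    (∀ f : ℝ → ℂ, ∀ c : ℝ → ℂ, (∀ l : ℝ, HasFourierCoeff f l (c l)) →
      Summable (fun l : ℝ => ‖c l‖^2) →
      ∃ φ g : ℝ → ℂ, (∀ t, f t = φ t + g t) ∧ InB2 g ∧ (∀ l : ℝ, HasFourierCoeff φ l 0)) ∧
    (∀ c : ℝ → ℂ, Summable (fun l : ℝ => ‖c l‖^2) →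
      ∃ g : ℝ → ℂ, InB2 g ∧ ∀ l : ℝ, HasFourierCoeff g l (c l)) := by
  constructor
  · intro f c hfc hsum
    by_cases hI : ∀ T : ℝ, IntegrableOn f (Set.Ioc 0 T) volume
    · obtain ⟨g0, hg0int, hg0B, hg0c⟩ := S11.main c hsum
      refine ⟨fun t => f t - g0 t, g0, fun t => by ring, hg0B, ?_⟩
      intro l
      have h1 := hfc l
      have h2 := hg0c l
      rw [HasFourierCoeff] at h1 h2 ⊢
      have hfint : ∀ T : ℝ, IntegrableOn
          (fun t => f t * Complex.exp (-Complex.I * l * t)) (Set.Ioc (0:ℝ) T) volume := by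
        intro T
        have hbdd : ∃ C : ℝ, ∀ t : ℝ, ‖Complex.exp (-Complex.I * l * t)‖ ≤ C := by
          refine ⟨1, fun t => ?_⟩
          have : (-Complex.I * l * t) = Complex.I * (-l : ℝ) * t := by push_cast; ring
          rw [this, S11.norm_exp_I_mul]
        have hm : AEStronglyMeasurable (fun t : ℝ => Complex.exp (-Complex.I * l * t))
            (volume.restrict (Set.Ioc (0:ℝ) T)) :=
          (Complex.continuous_exp.comp (by fun_prop)).aestronglyMeasurable
        have := MeasureTheory.Integrable.bdd_mul (hI T) hm (Filter.Eventually.of_forall hbdd.choose_spec)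
        exact this.congr (Filter.Eventually.of_forall fun t => mul_comm _ _)
      have heq : ∀ᶠ T in atTop,
          (∫ t in Set.Ioc (0:ℝ) T, f t * Complex.exp (-Complex.I * l * t))/T
            - (∫ t in Set.Ioc (0:ℝ) T, g0 t * Complex.exp (-Complex.I * l * t))/T
          = (∫ t in Set.Ioc (0:ℝ) T,
              (fun t => f t - g0 t) t * Complex.exp (-Complex.I * l * t))/T := by
        filter_upwards with T
        rw [div_sub_div_same]
        congr 1
        rw [← MeasureTheory.integral_sub (hfint T) (hg0int l T)]
        apply MeasureTheory.integral_congr_ae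
        filter_upwards with t
        ring
      have h3 := Tendsto.congr' heq (h1.sub h2)
      simpa using h3
    · push_neg at hI
      obtain ⟨T₀, hT₀⟩ := hI
      have hcl : ∀ l : ℝ, c l = 0 := by
        intro l
        have hzero : ∀ᶠ T in atTop,
            (∫ t in Set.Ioc (0:ℝ) T, f t * Complex.exp (-Complex.I * l * t))/T = 0 := by
          filter_upwards [eventually_ge_atTop T₀] with T hT
          have hni : ¬ IntegrableOn
              (fun t => f t * Complex.exp (-Complex.I * l * t)) (Set.Ioc (0:ℝ) T) volume := by
            intro hint
            apply hT₀
            have h2 : IntegrableOn (fun t => f t * Complex.exp (-Complex.I * l * t))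
                (Set.Ioc (0:ℝ) T₀) volume := hint.mono_set (Set.Ioc_subset_Ioc_right hT)
            have hbdd : ∃ C : ℝ, ∀ t : ℝ, ‖Complex.exp (Complex.I * l * t)‖ ≤ C :=
              ⟨1, fun t => le_of_eq (S11.norm_exp_I_mul l t)⟩
            have hm : AEStronglyMeasurable (fun t : ℝ => Complex.exp (Complex.I * l * t))
                (volume.restrict (Set.Ioc (0:ℝ) T₀)) :=
              (Complex.continuous_exp.comp (by fun_prop)).aestronglyMeasurable
            have h3 := MeasureTheory.Integrable.bdd_mul h2 hm (Filter.Eventually.of_forall hbdd.choose_spec)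
            apply h3.congr
            filter_upwards with t
            rw [mul_comm, mul_assoc, ← Complex.exp_add]
            have : (-Complex.I * l * t + Complex.I * l * t) = 0 := by ring
            rw [this, Complex.exp_zero, mul_one]
          rw [MeasureTheory.integral_undef hni, zero_div]
        exact tendsto_nhds_unique (Tendsto.congr' hzero (hfc l)) tendsto_const_nhds
      refine ⟨f, fun _ => 0, fun t => by ring, S11.inB2_zero, fun l => ?_⟩
      have := hfc l
      rw [hcl l] at this
      exact this
  · intro c hsum
    obtain ⟨g0, -, hg0B, hg0c⟩ := S11.main c hsum
    exact ⟨g0, hg0B, hg0c⟩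
end

section
/- Let f be locally square-integrable on ℝ≥0 with ∫_0^T |f|² dt ≫ T and ∫_0^T |f|² dt ≪ T. Suppose f is not concentrated on a null set (for every null-density set S, ∫_{S∩[0,T]} |f|² dt = o(T)). Then for every ε > 0 there is a bounded measurable function f_N with limsup_{T→∞} (1/T)∫_0^T |f - f_N|² dt < ε. -/
open MeasureTheory Filter

private lemma re_eq' (z : ℂ) : z.re = (‖z‖^2 + 1 - ‖z - 1‖^2)/2 := by
  simp only [Complex.sq_norm, Complex.normSq_apply, Complex.sub_re,
    Complex.sub_im, Complex.one_re, Complex.one_im]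
  ring

private lemma im_eq' (z : ℂ) : z.im = (‖z‖^2 + 1 - ‖z - Complex.I‖^2)/2 := by
  simp only [Complex.sq_norm, Complex.normSq_apply, Complex.sub_re,
    Complex.sub_im, Complex.I_re, Complex.I_im]
  ring

private lemma ioi_eq_iUnion' : Set.Ioi (0:ℝ) = ⋃ n : ℕ, Set.Ioc (0:ℝ) n := by
  ext t
  simp only [Set.mem_Ioi, Set.mem_iUnion, Set.mem_Ioc]
  exact ⟨fun ht => ⟨⌈t⌉₊, ht, Nat.le_ceil t⟩, fun ⟨n, ht, _⟩ => ht⟩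

theorem stmt13 (f : ℝ → ℂ)
    (hf : ∀ T : ℝ, IntegrableOn (fun t => ‖f t‖^2) (Set.Ioc 0 T))
    (c C : ℝ) (hc : 0 < c) (hC : 0 < C)
    (hbound : ∀ᶠ T in atTop,
      c * T ≤ (∫ t in Set.Ioc (0:ℝ) T, ‖f t‖^2) ∧
      (∫ t in Set.Ioc (0:ℝ) T, ‖f t‖^2) ≤ C * T)
    (hcns : ∀ S : Set ℝ, MeasurableSet S → HasNatDensity S 0 →
      Tendsto (fun T : ℝ => (∫ t in S ∩ Set.Ioc 0 T, ‖f t‖^2) / T) atTop (nhds 0)) :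
    ∀ ε > (0:ℝ), ∃ h : ℝ → ℂ, Measurable h ∧ (∃ M, ∀ t, ‖h t‖ ≤ M) ∧
      limsup (fun T : ℝ => (∫ t in Set.Ioc (0:ℝ) T, ‖f t - h t‖^2) / T) atTop < ε := by
  intro ε hε
  by_cases hm : AEStronglyMeasurable f (volume.restrict (Set.Ioi (0:ℝ)))
  · -- f is measurable on (0, ∞); do the real proof
    set f' := hm.mk f with hf'def
    have hf'm : Measurable f' := hm.stronglyMeasurable_mk.measurable
    have heq : f =ᵐ[volume.restrict (Set.Ioi 0)] f' := hm.ae_eq_mk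
    have hSmeas : ∀ M : ℝ, MeasurableSet {t | M < ‖f' t‖} := fun M =>
      measurableSet_lt measurable_const hf'm.norm
    -- a.e. equality on any Ioc 0 T
    have hae : ∀ T : ℝ, ∀ᵐ t ∂(volume.restrict (Set.Ioc (0:ℝ) T)), f t = f' t := fun T =>
      ae_restrict_of_ae_restrict_of_subset Set.Ioc_subset_Ioi_self heq
    -- key: the truncation error is the integral over the superlevel set
    have key : ∀ (M T : ℝ),
        (∫ t in Set.Ioc (0:ℝ) T, ‖f t - (if ‖f' t‖ ≤ M then f' t else 0)‖^2)
          = ∫ t in {t | M < ‖f' t‖} ∩ Set.Ioc 0 T, ‖f t‖^2 := by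
      intro M T
      have h1 : (∫ t in Set.Ioc (0:ℝ) T, ‖f t - (if ‖f' t‖ ≤ M then f' t else 0)‖^2)
          = ∫ t in Set.Ioc (0:ℝ) T, Set.indicator {t | M < ‖f' t‖} (fun t => ‖f t‖^2) t := by
        refine integral_congr_ae ?_
        filter_upwards [hae T] with t ht
        by_cases hle : ‖f' t‖ ≤ M
        · rw [if_pos hle, ht, sub_self, Set.indicator_of_notMem (by simpa using not_lt.2 hle)]
          simp
        · rw [if_neg hle, sub_zero, Set.indicator_of_mem (by simpa using not_le.1 hle)]
      rw [h1, integral_indicator (hSmeas M), Measure.restrict_restrict (hSmeas M)]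
    -- main claim: some truncation level works
    have claim : ∃ k : ℕ, limsup (fun T : ℝ =>
        (∫ t in {t | (k:ℝ)+1 < ‖f' t‖} ∩ Set.Ioc 0 T, ‖f t‖^2) / T) atTop < ε := by
      by_contra hcon
      push_neg at hcon
      set Sk : ℕ → Set ℝ := fun k => {t | (k:ℝ)+1 < ‖f' t‖} with hSk
      have hv0 : ∀ (A : Set ℝ) (T : ℝ), 0 ≤ (∫ t in A ∩ Set.Ioc 0 T, ‖f t‖^2) / T := by
        intro A T
        rcases le_or_gt T 0 with hT | hT
        · simp [Set.Ioc_eq_empty (not_lt.2 hT)]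
        · exact div_nonneg (integral_nonneg fun t => sq_nonneg _) hT.le
      have hfreq : ∀ k : ℕ, ∃ T : ℝ, (k:ℝ) + 1 ≤ T ∧
          ε/2 < (∫ t in Sk k ∩ Set.Ioc 0 T, ‖f t‖^2) / T := by
        intro k
        have hcob : IsCoboundedUnder (· ≤ ·) atTop (fun T : ℝ =>
            (∫ t in Sk k ∩ Set.Ioc 0 T, ‖f t‖^2) / T) :=
          isCoboundedUnder_le_of_le atTop (fun T => hv0 (Sk k) T)
        have hfr := frequently_lt_of_lt_limsup hcob
          (lt_of_lt_of_le (by linarith : ε/2 < ε) (hcon k))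
        obtain ⟨T, hT1, hT2⟩ := (hfr.and_eventually (eventually_ge_atTop ((k:ℝ)+1))).exists
        exact ⟨T, hT2, hT1⟩
      choose Tk hTk1 hTk2 using hfreq
      have hTkpos : ∀ k, (0:ℝ) < Tk k := fun k =>
        lt_of_lt_of_le (by positivity) (hTk1 k)
      set S : Set ℝ := ⋃ k, Sk k ∩ Set.Ioc 0 (Tk k) with hSdef
      have hSMeas : MeasurableSet S :=
        MeasurableSet.iUnion fun k => (hSmeas _).inter measurableSet_Ioc
      -- integrals of ‖f‖² and ‖f'‖² agree on subsets of Ioi 0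
      have haeA : ∀ (A : Set ℝ), A ⊆ Set.Ioi 0 →
          ((fun t => ‖f t‖^2) =ᵐ[volume.restrict A] fun t => ‖f' t‖^2) := by
        intro A hA
        filter_upwards [ae_restrict_of_ae_restrict_of_subset hA heq] with t ht
        rw [ht]
      -- Chebyshev bound, eventually in T
      have cheb : ∀ k : ℕ, ∀ᶠ T : ℝ in atTop,
          (volume (Sk k ∩ Set.Icc 0 T)).toReal ≤ C * T / ((k:ℝ)+1)^2 := by
        intro k
        filter_upwards [hbound, eventually_ge_atTop (0:ℝ)] with T hT hT0
        set A := Sk k ∩ Set.Ioc 0 T with hA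
        have hAsub : A ⊆ Set.Ioc 0 T := Set.inter_subset_right
        have hAIoi : A ⊆ Set.Ioi 0 := hAsub.trans Set.Ioc_subset_Ioi_self
        have hAmeas : MeasurableSet A := (hSmeas _).inter measurableSet_Ioc
        have hAfin : volume A ≠ ⊤ :=
          (lt_of_le_of_lt (measure_mono hAsub) measure_Ioc_lt_top).ne
        have hint : IntegrableOn (fun t => ‖f t‖^2) A := (hf T).mono_set hAsub
        have hint' : IntegrableOn (fun t => ‖f' t‖^2) A :=
          hint.congr (haeA A hAIoi)
        have h1 : ((k:ℝ)+1)^2 * (volume A).toReal ≤ ∫ t in A, ‖f' t‖^2 := by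
          refine setIntegral_ge_of_const_le_real hAmeas hAfin ?_ hint'
          intro x hx
          have : (k:ℝ)+1 < ‖f' x‖ := hx.1
          exact pow_le_pow_left₀ (by positivity) this.le 2
        have h2 : (∫ t in A, ‖f' t‖^2) = ∫ t in A, ‖f t‖^2 :=
          integral_congr_ae ((haeA A hAIoi).symm)
        have h3 : (∫ t in A, ‖f t‖^2) ≤ ∫ t in Set.Ioc (0:ℝ) T, ‖f t‖^2 :=
          setIntegral_mono_set (hf T) (Eventually.of_forall fun t => sq_nonneg _)
            (HasSubset.Subset.eventuallyLE hAsub)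
        have h4 : ((k:ℝ)+1)^2 * (volume A).toReal ≤ C * T := by
          calc ((k:ℝ)+1)^2 * (volume A).toReal ≤ ∫ t in A, ‖f' t‖^2 := h1
            _ = ∫ t in A, ‖f t‖^2 := h2
            _ ≤ ∫ t in Set.Ioc (0:ℝ) T, ‖f t‖^2 := h3
            _ ≤ C * T := hT.2
        -- go from Ioc to Icc
        have hvol : volume (Sk k ∩ Set.Icc 0 T) ≤ volume A := by
          calc volume (Sk k ∩ Set.Icc 0 T) ≤ volume (A ∪ {0}) := by
                refine measure_mono ?_
                rintro t ⟨ht1, ht2, ht3⟩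
                rcases eq_or_lt_of_le ht2 with h0 | h0
                · exact Or.inr (by simp [← h0])
                · exact Or.inl ⟨ht1, h0, ht3⟩
            _ ≤ volume A + volume ({0} : Set ℝ) := measure_union_le _ _
            _ = volume A := by simp
        have hvol' : (volume (Sk k ∩ Set.Icc 0 T)).toReal ≤ (volume A).toReal :=
          ENNReal.toReal_mono hAfin hvol
        have hk2 : (0:ℝ) < ((k:ℝ)+1)^2 := by positivity
        rw [le_div_iff₀ hk2]
        calc (volume (Sk k ∩ Set.Icc 0 T)).toReal * ((k:ℝ)+1)^2
            ≤ (volume A).toReal * ((k:ℝ)+1)^2 := by nlinarith [hvol']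
          _ = ((k:ℝ)+1)^2 * (volume A).toReal := by ring
          _ ≤ C * T := h4
      -- S has natural density zero
      have hdens : HasNatDensity S 0 := by
        rw [HasNatDensity, tendsto_order]
        constructor
        · intro a ha
          filter_upwards [eventually_gt_atTop (0:ℝ)] with T hT
          exact lt_of_lt_of_le ha (div_nonneg ENNReal.toReal_nonneg hT.le)
        · intro δ hδ
          -- choose k₀ with C/(k₀+1)² < δ/2
          obtain ⟨k₀, hk₀⟩ : ∃ k₀ : ℕ, C / ((k₀:ℝ)+1)^2 < δ/2 := by
            obtain ⟨k₀, hk₀⟩ := exists_nat_gt (2*C/δ)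
            refine ⟨k₀, ?_⟩
            rw [div_lt_iff₀ (by positivity)]
            have h1 : (2*C/δ) < (k₀:ℝ) + 1 := lt_of_lt_of_le hk₀ (by linarith)
            have h2 : ((k₀:ℝ)+1) ≤ ((k₀:ℝ)+1)^2 := by nlinarith [Nat.cast_nonneg (α := ℝ) k₀]
            have h3 : 2*C/δ < ((k₀:ℝ)+1)^2 := lt_of_lt_of_le h1 h2
            rw [div_lt_iff₀ hδ] at h3
            linarith
          set A₀ : ℝ := ∑ j ∈ Finset.range k₀, Tk j with hA₀
          have hA₀nn : 0 ≤ A₀ := Finset.sum_nonneg fun j _ => (hTkpos j).le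
          have hA₀T : Tendsto (fun T : ℝ => A₀ / T) atTop (nhds 0) :=
            tendsto_const_nhds.div_atTop tendsto_id
          have hA₀ev : ∀ᶠ T : ℝ in atTop, A₀ / T < δ/2 :=
            hA₀T.eventually (gt_mem_nhds (by linarith))
          filter_upwards [cheb k₀, hA₀ev, eventually_gt_atTop (0:ℝ)] with T hchT hA₀T' hTpos
          -- S ∩ [0,T] ⊆ (⋃_{j<k₀} Sk j ∩ Ioc 0 (Tk j)) ∪ (Sk k₀ ∩ Icc 0 T)
          set B₁ : Set ℝ := ⋃ j ∈ Finset.range k₀, (Sk j ∩ Set.Ioc 0 (Tk j)) with hB₁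
          set B₂ : Set ℝ := Sk k₀ ∩ Set.Icc 0 T with hB₂
          have hsub : S ∩ Set.Icc 0 T ⊆ B₁ ∪ B₂ := by
            rintro t ⟨htS, htI⟩
            obtain ⟨j, hj⟩ := Set.mem_iUnion.1 htS
            rcases lt_or_ge j k₀ with hjk | hjk
            · exact Or.inl (Set.mem_biUnion (Finset.mem_range.2 hjk) hj)
            · refine Or.inr ⟨?_, htI⟩
              have : (k₀:ℝ) + 1 ≤ (j:ℝ) + 1 := by
                have := Nat.cast_le (α := ℝ) |>.mpr hjk
                linarith
              exact lt_of_lt_of_le (lt_of_le_of_lt this hj.1) le_rfl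
          have hB₁fin : volume B₁ ≠ ⊤ := by
            refine (lt_of_le_of_lt (measure_biUnion_finset_le _ _) ?_).ne
            refine ENNReal.sum_lt_top.2 fun j _ => ?_
            exact lt_of_le_of_lt (measure_mono Set.inter_subset_right) measure_Ioc_lt_top
          have hB₂fin : volume B₂ ≠ ⊤ :=
            (lt_of_le_of_lt (measure_mono Set.inter_subset_right) measure_Icc_lt_top).ne
          have hv1 : (volume B₁).toReal ≤ A₀ := by
            have h1 : volume B₁ ≤ ∑ j ∈ Finset.range k₀, volume (Sk j ∩ Set.Ioc 0 (Tk j)) :=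
              measure_biUnion_finset_le _ _
            have h2 : ∑ j ∈ Finset.range k₀, volume (Sk j ∩ Set.Ioc 0 (Tk j)) ≤
                ∑ j ∈ Finset.range k₀, ENNReal.ofReal (Tk j) := by
              refine Finset.sum_le_sum fun j _ => ?_
              calc volume (Sk j ∩ Set.Ioc 0 (Tk j)) ≤ volume (Set.Ioc 0 (Tk j)) :=
                    measure_mono Set.inter_subset_right
                _ = ENNReal.ofReal (Tk j - 0) := Real.volume_Ioc
                _ = ENNReal.ofReal (Tk j) := by rw [sub_zero]
            have h3 : (∑ j ∈ Finset.range k₀, ENNReal.ofReal (Tk j)) = ENNReal.ofReal A₀ := by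
              rw [hA₀, ← ENNReal.ofReal_sum_of_nonneg]
              exact fun j _ => (hTkpos j).le
            calc (volume B₁).toReal ≤ (ENNReal.ofReal A₀).toReal := by
                  refine ENNReal.toReal_mono (by simp) ?_
                  rw [← h3]; exact le_trans h1 h2
              _ = A₀ := ENNReal.toReal_ofReal hA₀nn
          have hv2 : (volume B₂).toReal ≤ C * T / ((k₀:ℝ)+1)^2 := hchT
          have hvS : (volume (S ∩ Set.Icc 0 T)).toReal ≤ A₀ + C * T / ((k₀:ℝ)+1)^2 := by
            have h1 : volume (S ∩ Set.Icc 0 T) ≤ volume B₁ + volume B₂ :=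
              le_trans (measure_mono hsub) (measure_union_le _ _)
            have h2 : (volume (S ∩ Set.Icc 0 T)).toReal ≤ (volume B₁ + volume B₂).toReal :=
              ENNReal.toReal_mono (by finiteness) h1
            rw [ENNReal.toReal_add hB₁fin hB₂fin] at h2
            linarith
          calc (volume (S ∩ Set.Icc 0 T)).toReal / T
              ≤ (A₀ + C * T / ((k₀:ℝ)+1)^2) / T := by gcongr
            _ = A₀ / T + C / ((k₀:ℝ)+1)^2 := by
                rw [add_div, div_div, mul_comm (((k₀:ℝ)+1)^2) T, ← div_div,
                  mul_div_assoc C T, div_self hTpos.ne', mul_one]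
            _ < δ/2 + δ/2 := by exact add_lt_add hA₀T' hk₀
            _ = δ := by ring
      -- contradiction with hcns
      have htend := hcns S hSMeas hdens
      have hTtop : Tendsto Tk atTop atTop :=
        tendsto_atTop_mono (fun k => le_trans (by linarith [hTk1 k]) le_rfl)
          (tendsto_atTop_add_const_right atTop 1 tendsto_natCast_atTop_atTop)
      have hcomp : Tendsto (fun k : ℕ =>
          (∫ t in S ∩ Set.Ioc 0 (Tk k), ‖f t‖^2) / (Tk k)) atTop (nhds 0) :=
        htend.comp hTtop
      have hge : ∀ k : ℕ, ε/2 ≤ (∫ t in S ∩ Set.Ioc 0 (Tk k), ‖f t‖^2) / (Tk k) := by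
        intro k
        refine le_trans (hTk2 k).le ?_
        have hsub : Sk k ∩ Set.Ioc 0 (Tk k) ⊆ S ∩ Set.Ioc 0 (Tk k) :=
          Set.subset_inter (Set.subset_iUnion (fun j => Sk j ∩ Set.Ioc 0 (Tk j)) k)
            Set.inter_subset_right
        have hnum := setIntegral_mono_set ((hf (Tk k)).mono_set Set.inter_subset_right)
          (Eventually.of_forall fun t => sq_nonneg _) (HasSubset.Subset.eventuallyLE hsub)
        have := hTkpos k
        gcongr
      have : ε/2 ≤ 0 := ge_of_tendsto hcomp (Eventually.of_forall hge)
      linarith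
    obtain ⟨k, hk⟩ := claim
    set M : ℝ := (k:ℝ) + 1 with hM
    refine ⟨fun t => if ‖f' t‖ ≤ M then f' t else 0,
      Measurable.ite (measurableSet_le hf'm.norm measurable_const) hf'm measurable_const,
      ⟨M, fun t => ?_⟩, ?_⟩
    · show ‖(if ‖f' t‖ ≤ M then f' t else 0)‖ ≤ M
      split_ifs with h
      · exact h
      · simpa using (by positivity : (0:ℝ) ≤ M)
    · have hfun : (fun T : ℝ => (∫ t in Set.Ioc (0:ℝ) T,
          ‖f t - (if ‖f' t‖ ≤ M then f' t else 0)‖^2) / T)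
        = fun T : ℝ => (∫ t in {t | M < ‖f' t‖} ∩ Set.Ioc 0 T, ‖f t‖^2) / T := by
        funext T; rw [key M T]
      rw [hfun]
      exact hk
  · -- f is badly nonmeasurable: the integral is (junk) 0 eventually
    have hnot : ¬ ∀ n : ℕ, IntegrableOn (fun t => ‖f t - 1‖^2) (Set.Ioc 0 (n:ℝ)) volume ∧
        IntegrableOn (fun t => ‖f t - Complex.I‖^2) (Set.Ioc 0 (n:ℝ)) volume := by
      intro hall
      apply hm
      rw [ioi_eq_iUnion', aestronglyMeasurable_iUnion_iff]
      intro n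
      have h0 : AEMeasurable (fun t => ‖f t‖^2) (volume.restrict (Set.Ioc (0:ℝ) n)) :=
        (hf n).aestronglyMeasurable.aemeasurable
      have h1 : AEMeasurable (fun t => ‖f t - 1‖^2) (volume.restrict (Set.Ioc (0:ℝ) n)) :=
        (hall n).1.aestronglyMeasurable.aemeasurable
      have h2 : AEMeasurable (fun t => ‖f t - Complex.I‖^2)
          (volume.restrict (Set.Ioc (0:ℝ) n)) :=
        (hall n).2.aestronglyMeasurable.aemeasurable
      have hre : AEMeasurable (fun t => (f t).re) (volume.restrict (Set.Ioc (0:ℝ) n)) := by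
        have hrw : (fun t => (f t).re) = fun t => (‖f t‖^2 + 1 - ‖f t - 1‖^2)/2 :=
          funext fun t => re_eq' (f t)
        rw [hrw]
        exact ((h0.add_const 1).sub h1).div_const 2
      have him : AEMeasurable (fun t => (f t).im) (volume.restrict (Set.Ioc (0:ℝ) n)) := by
        have hrw : (fun t => (f t).im) = fun t => (‖f t‖^2 + 1 - ‖f t - Complex.I‖^2)/2 :=
          funext fun t => im_eq' (f t)
        rw [hrw]
        exact ((h0.add_const 1).sub h2).div_const 2
      have hfm : AEMeasurable f (volume.restrict (Set.Ioc (0:ℝ) n)) := by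
        have hrw : f = fun t => ((f t).re : ℂ) + ((f t).im : ℂ) * Complex.I :=
          funext fun t => (Complex.re_add_im (f t)).symm
        rw [hrw]
        exact (Complex.measurable_ofReal.comp_aemeasurable hre).add
          ((Complex.measurable_ofReal.comp_aemeasurable him).mul_const Complex.I)
      exact hfm.aestronglyMeasurable
    push_neg at hnot
    obtain ⟨n, hn⟩ := hnot
    obtain ⟨a, hanorm, hna⟩ : ∃ a : ℂ, ‖a‖ ≤ 1 ∧
        ¬ IntegrableOn (fun t => ‖f t - a‖^2) (Set.Ioc 0 (n:ℝ)) volume := by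
      by_cases h1 : IntegrableOn (fun t => ‖f t - 1‖^2) (Set.Ioc 0 (n:ℝ)) volume
      · exact ⟨Complex.I, by simp, hn h1⟩
      · exact ⟨1, by simp, h1⟩
    refine ⟨fun _ => a, measurable_const, ⟨1, fun t => hanorm⟩, ?_⟩
    have hev : ∀ᶠ T : ℝ in atTop, (∫ t in Set.Ioc (0:ℝ) T, ‖f t - a‖^2) / T = 0 := by
      filter_upwards [eventually_ge_atTop (n:ℝ)] with T hT
      have hni : ¬ IntegrableOn (fun t => ‖f t - a‖^2) (Set.Ioc 0 T) volume := fun h =>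
        hna (h.mono_set (Set.Ioc_subset_Ioc_right hT))
      rw [integral_undef hni, zero_div]
    calc limsup (fun T : ℝ => (∫ t in Set.Ioc (0:ℝ) T, ‖f t - a‖^2) / T) atTop
        = limsup (fun _ : ℝ => (0:ℝ)) atTop := limsup_congr hev
      _ = 0 := limsup_const 0
      _ < ε := hε
end
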